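/- arXiv:math/0606632 — 2 statements merged into one kernel-verified Lean document; each statement's English description precedes it below -/
import Mathlib

section
/- Let G be a finite simple graph. Then χ(G) ≤ (1/2)(ω(G) + (|G| + Δ(G) + 1)/2), where χ(G) is the chromatic number, ω(G) the clique number, Δ(G) the maximum degree, and |G| the number of vertices of G. -/
open Finset

namespace ChromBound

variable {V : Type*}

lemma toNat_chrom_le {G : SimpleGraph V} {m : ℕ} (h : G.Colorable m) :
    G.chromaticNumber.toNat ≤ m :=
  ENat.toNat_le_of_le_coe h.chromaticNumber_le

section Ext

variable [Fintype V] [DecidableEq V] (G : SimpleGraph V) [DecidableRel G.Adj] (S : Finset V)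

instance : DecidableRel (G.comap (fun v : {v : V // v ∉ S} => (v : V))).Adj :=
  fun a b => inferInstanceAs (Decidable (G.Adj a b))

omit [Fintype V] [DecidableEq V] [DecidableRel G.Adj] in
/-- Extend a coloring of the complement of an independent set by one new color. -/
lemma colorable_extend {k : ℕ}
    (hS : ∀ a ∈ S, ∀ b ∈ S, a ≠ b → ¬ G.Adj a b)
    (h : (G.comap (fun v : {v : V // v ∉ S} => (v : V))).Colorable k) :
    G.Colorable (k + 1) := by
  classical
  obtain ⟨C⟩ := h
  refine ⟨SimpleGraph.Coloring.mk
    (fun v => if hv : v ∈ S then Fin.last k else (C ⟨v, hv⟩).castSucc) ?_⟩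
  intro v w hadj
  by_cases hv : v ∈ S <;> by_cases hw : w ∈ S <;> simp only [hv, hw, dif_pos, dif_neg]
  · exact absurd hadj (hS v hv w hw hadj.ne)
  · intro hc; exact (Fin.castSucc_lt_last _).ne' hc
  · intro hc; exact (Fin.castSucc_lt_last _).ne hc
  · intro hc
    have : C ⟨v, hv⟩ ≠ C ⟨w, hw⟩ := C.valid (by simpa using hadj)
    exact this (Fin.castSucc_injective _ hc)

omit [DecidableEq V] [DecidableRel G.Adj] in
lemma cliqueNum_comap_le :
    (G.comap (fun v : {v : V // v ∉ S} => (v : V))).cliqueNum ≤ G.cliqueNum := by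
  classical
  obtain ⟨t, ht⟩ := SimpleGraph.exists_isNClique_cliqueNum
    (G := G.comap (fun v : {v : V // v ∉ S} => (v : V)))
  have hmap : G.IsClique ((t.image (fun v : {v : V // v ∉ S} => (v : V)) : Finset V) : Set V) := by
    intro a ha b hb hab
    simp only [coe_image, Set.mem_image, mem_coe] at ha hb
    obtain ⟨a', ha', rfl⟩ := ha
    obtain ⟨b', hb', rfl⟩ := hb
    have hab' : a' ≠ b' := fun h => hab (congrArg _ h)
    exact ht.isClique (Finset.mem_coe.2 ha') (Finset.mem_coe.2 hb') hab'
  have hcard : (t.image (fun v : {v : V // v ∉ S} => (v : V))).card = t.card :=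
    Finset.card_image_of_injective _ Subtype.val_injective
  calc (G.comap (fun v : {v : V // v ∉ S} => (v : V))).cliqueNum = t.card := (ht.card_eq).symm
    _ = (t.image (fun v : {v : V // v ∉ S} => (v : V))).card := hcard.symm
    _ ≤ G.cliqueNum := SimpleGraph.IsClique.card_le_cliqueNum (tc := hmap)

lemma degree_comap_le (v : {v : V // v ∉ S}) :
    (G.comap (fun v : {v : V // v ∉ S} => (v : V))).degree v ≤ G.degree (v : V) := by
  rw [← SimpleGraph.card_neighborFinset_eq_degree, ← SimpleGraph.card_neighborFinset_eq_degree]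
  refine Finset.card_le_card_of_injOn (fun w => (w : V)) ?_ ?_
  · intro w hw
    simp only [Finset.mem_coe, SimpleGraph.mem_neighborFinset] at hw ⊢
    exact hw
  · intro a _ b _ h
    exact Subtype.val_injective h

lemma maxDegree_comap_le :
    (G.comap (fun v : {v : V // v ∉ S} => (v : V))).maxDegree ≤ G.maxDegree := by
  apply SimpleGraph.maxDegree_le_of_forall_degree_le
  intro v
  exact le_trans (degree_comap_le G S v) (G.degree_le_maxDegree _)

/-- If every vertex outside `S` has a neighbor inside `S`, max degree drops. -/
lemma maxDegree_comap_lt [Nonempty {v : V // v ∉ S}]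
    (hnb : ∀ v : {v : V // v ∉ S}, ∃ w ∈ S, G.Adj (v : V) w) :
    (G.comap (fun v : {v : V // v ∉ S} => (v : V))).maxDegree + 1 ≤ G.maxDegree := by
  obtain ⟨v, hv⟩ := SimpleGraph.exists_maximal_degree_vertex
    (G.comap (fun v : {v : V // v ∉ S} => (v : V)))
  rw [hv]
  obtain ⟨w, hwS, hadj⟩ := hnb v
  have hwmem : w ∈ G.neighborFinset (v : V) := by
    simp [SimpleGraph.mem_neighborFinset, hadj]
  have h1 : (G.comap (fun v : {v : V // v ∉ S} => (v : V))).degree v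
      ≤ ((G.neighborFinset (v : V)).erase w).card := by
    rw [← SimpleGraph.card_neighborFinset_eq_degree]
    refine Finset.card_le_card_of_injOn (fun z => (z : V)) ?_ ?_
    · intro z hz
      simp only [Finset.mem_coe, SimpleGraph.mem_neighborFinset] at hz
      refine Finset.mem_erase.2 ⟨?_, ?_⟩
      · rintro rfl; exact z.2 hwS
      · simp only [SimpleGraph.mem_neighborFinset]; exact hz
    · intro a _ b _ h; exact Subtype.val_injective h
  have h2 : ((G.neighborFinset (v : V)).erase w).card + 1 = G.degree (v : V) := by
    rw [Finset.card_erase_of_mem hwmem, ← SimpleGraph.card_neighborFinset_eq_degree]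
    have hpos : 0 < (G.neighborFinset (v : V)).card := Finset.card_pos.2 ⟨w, hwmem⟩
    omega
  calc (G.comap (fun v : {v : V // v ∉ S} => (v : V))).degree v + 1
      ≤ ((G.neighborFinset (v : V)).erase w).card + 1 := by omega
    _ = G.degree (v : V) := h2
    _ ≤ G.maxDegree := G.degree_le_maxDegree _

end Ext

section Core2

variable [Fintype V] [DecidableEq V] (G : SimpleGraph V) [DecidableRel G.Adj]

/-- A valid pairing: an involution matching up non-adjacent vertices. -/
def Valid (f : V → V) : Prop :=
  Function.Involutive f ∧ ∀ v, f v ≠ v → ¬ G.Adj v (f v)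

def fixedSet (f : V → V) : Finset V := univ.filter (fun v => f v = v)

lemma valid_id : Valid G (id : V → V) := ⟨fun _ => rfl, fun v h => absurd rfl h⟩

/-- Generic exchange: replacing `f` on an `f`-closed set `s` by a fixed-point-free
valid pairing `π` of `s` strictly decreases the number of fixed points if `s`
contains a fixed point. -/
lemma exchange {f : V → V} (hf : Valid G f)
    (hmin : ∀ g, Valid G g → (fixedSet f).card ≤ (fixedSet g).card)
    (s : Finset V) (hsf : ∀ v ∈ s, f v ∈ s)
    (π : V → V) (hπs : ∀ v ∈ s, π v ∈ s) (hππ : ∀ v ∈ s, π (π v) = v)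
    (hπne : ∀ v ∈ s, π v ≠ v) (hπadj : ∀ v ∈ s, ¬ G.Adj v (π v))
    (v₀ : V) (hv₀s : v₀ ∈ s) (hv₀f : f v₀ = v₀) : False := by
  classical
  set g : V → V := fun v => if v ∈ s then π v else f v with hg
  have hfs : ∀ v, f v ∈ s ↔ v ∈ s := by
    intro v
    constructor
    · intro h; have := hsf _ h; rwa [hf.1 v] at this
    · exact hsf v
  have hginv : Function.Involutive g := by
    intro v
    by_cases hv : v ∈ s
    · simp only [hg, if_pos hv, if_pos (hπs _ hv)]
      exact hππ _ hv
    · have h2 : f v ∉ s := fun h => hv ((hfs v).1 h)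
      simp only [hg, if_neg hv, if_neg h2]
      exact hf.1 v
  have hgval : Valid G g := by
    refine ⟨hginv, fun v hne => ?_⟩
    by_cases hv : v ∈ s
    · simpa only [hg, if_pos hv] using hπadj _ hv
    · have h2 : f v ∉ s := fun h => hv ((hfs v).1 h)
      simp only [hg, if_neg hv] at hne ⊢
      exact hf.2 v hne
  have hfix : fixedSet g = (fixedSet f) \ s := by
    ext v
    simp only [fixedSet, mem_filter, mem_univ, true_and, mem_sdiff]
    by_cases hv : v ∈ s
    · simp only [hg, if_pos hv, hv]
      exact ⟨fun h => absurd h (hπne _ hv), fun h => absurd trivial (fun _ => h.2 trivial)⟩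
    · simp only [hg, if_neg hv, hv]
      tauto
  have hlt : (fixedSet g).card < (fixedSet f).card := by
    rw [hfix]
    apply Finset.card_lt_card
    constructor
    · exact Finset.sdiff_subset
    · intro hsub
      have hv₀ : v₀ ∈ fixedSet f := by simp [fixedSet, hv₀f]
      have := hsub hv₀
      rw [mem_sdiff] at this
      exact this.2 hv₀s
  exact absurd (hmin g hgval) (not_le.2 hlt)

/-- Exchange 1 : two nonadjacent fixed points can be merged. -/
lemma exchange1 {f : V → V} (hf : Valid G f)
    (hmin : ∀ g, Valid G g → (fixedSet f).card ≤ (fixedSet g).card)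
    {x y : V} (hxy : x ≠ y) (hfx : f x = x) (hfy : f y = y)
    (hadj : ¬ G.Adj x y) : False := by
  classical
  refine exchange G hf hmin {x, y} ?_ (fun v => if v = x then y else if v = y then x else v)
    ?_ ?_ ?_ ?_ x (by simp) hfx
  · intro v hv
    rcases mem_insert.1 hv with rfl | hv
    · simp [hfx]
    · simp only [mem_singleton] at hv; subst hv; simp [hfy]
  · intro v hv
    rcases mem_insert.1 hv with rfl | hv
    · simp [hxy]
    · simp only [mem_singleton] at hv; subst hv
      simp [hxy.symm, hxy]
  · intro v hv
    rcases mem_insert.1 hv with rfl | hv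
    · simp [hxy, hxy.symm]
    · simp only [mem_singleton] at hv; subst hv
      simp [hxy.symm, hxy]
  · intro v hv
    rcases mem_insert.1 hv with rfl | hv
    · simpa using hxy.symm
    · simp only [mem_singleton] at hv; subst hv
      simpa [hxy.symm] using hxy
  · intro v hv
    rcases mem_insert.1 hv with rfl | hv
    · simpa using hadj
    · simp only [mem_singleton] at hv; subst hv
      simpa [hxy.symm] using fun h => hadj (G.adj_symm h)


/-- Exchange 2. -/
lemma exchange2 {f : V → V} (hf : Valid G f)
    (hmin : ∀ g, Valid G g → (fixedSet f).card ≤ (fixedSet g).card)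
    {x y a b : V} (hfx : f x = x) (hfy : f y = y) (hfab : f a = b)
    (hxy : x ≠ y) (hxa : x ≠ a) (hxb : x ≠ b) (hya : y ≠ a) (hyb : y ≠ b) (hab : a ≠ b)
    (hadjxa : ¬ G.Adj x a) (hadjyb : ¬ G.Adj y b) : False := by
  classical
  have hfba : f b = a := by rw [← hfab, hf.1]
  have hmem : ∀ v ∈ ({x, a, y, b} : Finset V), v = x ∨ v = a ∨ v = y ∨ v = b := by
    intro v hv
    simpa [mem_insert, mem_singleton, or_assoc] using hv
  refine exchange G hf hmin {x, a, y, b} ?_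
    (fun v => if v = x then a else if v = a then x else if v = y then b else if v = b then y else v)
    ?_ ?_ ?_ ?_ x (by simp) hfx
  · intro v hv
    rcases hmem v hv with rfl | rfl | rfl | rfl
    · simp [hfx]
    · simp [hfab]
    · simp [hfy]
    · simp [hfba]
  · intro v hv
    rcases hmem v hv with rfl | rfl | rfl | rfl <;> simp [hxy, hxy.symm, hxa, hxa.symm, hxb, hxb.symm, hya, hya.symm, hyb, hyb.symm, hab, hab.symm]
  · intro v hv
    rcases hmem v hv with rfl | rfl | rfl | rfl <;> simp [hxy, hxy.symm, hxa, hxa.symm, hxb, hxb.symm, hya, hya.symm, hyb, hyb.symm, hab, hab.symm]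
  · intro v hv
    rcases hmem v hv with rfl | rfl | rfl | rfl
    · simpa [hxy, hxy.symm, hxa, hxa.symm, hxb, hxb.symm, hya, hya.symm, hyb, hyb.symm, hab, hab.symm] using hxa.symm
    · simpa [hxy, hxy.symm, hxa, hxa.symm, hxb, hxb.symm, hya, hya.symm, hyb, hyb.symm, hab, hab.symm] using hxa
    · simpa [hxy, hxy.symm, hxa, hxa.symm, hxb, hxb.symm, hya, hya.symm, hyb, hyb.symm, hab, hab.symm] using hyb.symm
    · simpa [hxy, hxy.symm, hxa, hxa.symm, hxb, hxb.symm, hya, hya.symm, hyb, hyb.symm, hab, hab.symm] using hyb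
  · intro v hv
    rcases hmem v hv with rfl | rfl | rfl | rfl
    · simpa [hxy, hxy.symm, hxa, hxa.symm, hxb, hxb.symm, hya, hya.symm, hyb, hyb.symm, hab, hab.symm] using hadjxa
    · simpa [hxy, hxy.symm, hxa, hxa.symm, hxb, hxb.symm, hya, hya.symm, hyb, hyb.symm, hab, hab.symm] using fun h => hadjxa (G.adj_symm h)
    · simpa [hxy, hxy.symm, hxa, hxa.symm, hxb, hxb.symm, hya, hya.symm, hyb, hyb.symm, hab, hab.symm] using hadjyb
    · simpa [hxy, hxy.symm, hxa, hxa.symm, hxb, hxb.symm, hya, hya.symm, hyb, hyb.symm, hab, hab.symm] using fun h => hadjyb (G.adj_symm h)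

/-- Exchange 3. -/
lemma exchange3 {f : V → V} (hf : Valid G f)
    (hmin : ∀ g, Valid G g → (fixedSet f).card ≤ (fixedSet g).card)
    {x y a b a' b' : V} (hfx : f x = x) (hfy : f y = y) (hfab : f a = b) (hfab' : f a' = b')
    (hxy : x ≠ y) (hxa : x ≠ a) (hxb : x ≠ b) (hxa' : x ≠ a') (hxb' : x ≠ b')
    (hya : y ≠ a) (hyb : y ≠ b) (hya' : y ≠ a') (hyb' : y ≠ b')
    (hab : a ≠ b) (haa' : a ≠ a') (hab' : a ≠ b') (hba' : b ≠ a') (hbb' : b ≠ b')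
    (ha'b' : a' ≠ b')
    (hadjxa' : ¬ G.Adj x a') (hadjya : ¬ G.Adj y a) (hadjbb' : ¬ G.Adj b b') : False := by
  classical
  have hfba : f b = a := by rw [← hfab, hf.1]
  have hfba' : f b' = a' := by rw [← hfab', hf.1]
  have hmem : ∀ v ∈ ({x, a', y, a, b, b'} : Finset V),
      v = x ∨ v = a' ∨ v = y ∨ v = a ∨ v = b ∨ v = b' := by
    intro v hv
    simpa [mem_insert, mem_singleton, or_assoc] using hv
  refine exchange G hf hmin {x, a', y, a, b, b'} ?_
    (fun v => if v = x then a' else if v = a' then x else if v = y then a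
      else if v = a then y else if v = b then b' else if v = b' then b else v)
    ?_ ?_ ?_ ?_ x (by simp) hfx
  · intro v hv
    rcases hmem v hv with rfl | rfl | rfl | rfl | rfl | rfl
    · simp [hfx]
    · simp [hfab', hxy, hxy.symm, hxa, hxa.symm, hxb, hxb.symm, hxa', hxa'.symm, hxb', hxb'.symm, hya, hya.symm, hyb, hyb.symm, hya', hya'.symm, hyb', hyb'.symm, hab, hab.symm, haa', haa'.symm, hab', hab'.symm, hba', hba'.symm, hbb', hbb'.symm, ha'b', ha'b'.symm]
    · simp [hfy, hxy, hxy.symm, hxa, hxa.symm, hxb, hxb.symm, hxa', hxa'.symm, hxb', hxb'.symm, hya, hya.symm, hyb, hyb.symm, hya', hya'.symm, hyb', hyb'.symm, hab, hab.symm, haa', haa'.symm, hab', hab'.symm, hba', hba'.symm, hbb', hbb'.symm, ha'b', ha'b'.symm]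
    · simp [hfab, hxy, hxy.symm, hxa, hxa.symm, hxb, hxb.symm, hxa', hxa'.symm, hxb', hxb'.symm, hya, hya.symm, hyb, hyb.symm, hya', hya'.symm, hyb', hyb'.symm, hab, hab.symm, haa', haa'.symm, hab', hab'.symm, hba', hba'.symm, hbb', hbb'.symm, ha'b', ha'b'.symm]
    · simp [hfba, hxy, hxy.symm, hxa, hxa.symm, hxb, hxb.symm, hxa', hxa'.symm, hxb', hxb'.symm, hya, hya.symm, hyb, hyb.symm, hya', hya'.symm, hyb', hyb'.symm, hab, hab.symm, haa', haa'.symm, hab', hab'.symm, hba', hba'.symm, hbb', hbb'.symm, ha'b', ha'b'.symm]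
    · simp [hfba', hxy, hxy.symm, hxa, hxa.symm, hxb, hxb.symm, hxa', hxa'.symm, hxb', hxb'.symm, hya, hya.symm, hyb, hyb.symm, hya', hya'.symm, hyb', hyb'.symm, hab, hab.symm, haa', haa'.symm, hab', hab'.symm, hba', hba'.symm, hbb', hbb'.symm, ha'b', ha'b'.symm]
  · intro v hv
    rcases hmem v hv with rfl | rfl | rfl | rfl | rfl | rfl <;> simp [hxy, hxy.symm, hxa, hxa.symm, hxb, hxb.symm, hxa', hxa'.symm, hxb', hxb'.symm, hya, hya.symm, hyb, hyb.symm, hya', hya'.symm, hyb', hyb'.symm, hab, hab.symm, haa', haa'.symm, hab', hab'.symm, hba', hba'.symm, hbb', hbb'.symm, ha'b', ha'b'.symm]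
  · intro v hv
    rcases hmem v hv with rfl | rfl | rfl | rfl | rfl | rfl <;> simp [hxy, hxy.symm, hxa, hxa.symm, hxb, hxb.symm, hxa', hxa'.symm, hxb', hxb'.symm, hya, hya.symm, hyb, hyb.symm, hya', hya'.symm, hyb', hyb'.symm, hab, hab.symm, haa', haa'.symm, hab', hab'.symm, hba', hba'.symm, hbb', hbb'.symm, ha'b', ha'b'.symm]
  · intro v hv
    rcases hmem v hv with rfl | rfl | rfl | rfl | rfl | rfl
    · simpa [hxy, hxy.symm, hxa, hxa.symm, hxb, hxb.symm, hxa', hxa'.symm, hxb', hxb'.symm, hya, hya.symm, hyb, hyb.symm, hya', hya'.symm, hyb', hyb'.symm, hab, hab.symm, haa', haa'.symm, hab', hab'.symm, hba', hba'.symm, hbb', hbb'.symm, ha'b', ha'b'.symm] using hxa'.symm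
    · simpa [hxy, hxy.symm, hxa, hxa.symm, hxb, hxb.symm, hxa', hxa'.symm, hxb', hxb'.symm, hya, hya.symm, hyb, hyb.symm, hya', hya'.symm, hyb', hyb'.symm, hab, hab.symm, haa', haa'.symm, hab', hab'.symm, hba', hba'.symm, hbb', hbb'.symm, ha'b', ha'b'.symm] using hxa'
    · simpa [hxy, hxy.symm, hxa, hxa.symm, hxb, hxb.symm, hxa', hxa'.symm, hxb', hxb'.symm, hya, hya.symm, hyb, hyb.symm, hya', hya'.symm, hyb', hyb'.symm, hab, hab.symm, haa', haa'.symm, hab', hab'.symm, hba', hba'.symm, hbb', hbb'.symm, ha'b', ha'b'.symm] using hya.symm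
    · simpa [hxy, hxy.symm, hxa, hxa.symm, hxb, hxb.symm, hxa', hxa'.symm, hxb', hxb'.symm, hya, hya.symm, hyb, hyb.symm, hya', hya'.symm, hyb', hyb'.symm, hab, hab.symm, haa', haa'.symm, hab', hab'.symm, hba', hba'.symm, hbb', hbb'.symm, ha'b', ha'b'.symm] using hya
    · simpa [hxy, hxy.symm, hxa, hxa.symm, hxb, hxb.symm, hxa', hxa'.symm, hxb', hxb'.symm, hya, hya.symm, hyb, hyb.symm, hya', hya'.symm, hyb', hyb'.symm, hab, hab.symm, haa', haa'.symm, hab', hab'.symm, hba', hba'.symm, hbb', hbb'.symm, ha'b', ha'b'.symm] using hbb'.symm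
    · simpa [hxy, hxy.symm, hxa, hxa.symm, hxb, hxb.symm, hxa', hxa'.symm, hxb', hxb'.symm, hya, hya.symm, hyb, hyb.symm, hya', hya'.symm, hyb', hyb'.symm, hab, hab.symm, haa', haa'.symm, hab', hab'.symm, hba', hba'.symm, hbb', hbb'.symm, ha'b', ha'b'.symm] using hbb'
  · intro v hv
    rcases hmem v hv with rfl | rfl | rfl | rfl | rfl | rfl
    · simpa [hxy, hxy.symm, hxa, hxa.symm, hxb, hxb.symm, hxa', hxa'.symm, hxb', hxb'.symm, hya, hya.symm, hyb, hyb.symm, hya', hya'.symm, hyb', hyb'.symm, hab, hab.symm, haa', haa'.symm, hab', hab'.symm, hba', hba'.symm, hbb', hbb'.symm, ha'b', ha'b'.symm] using hadjxa'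
    · simpa [hxy, hxy.symm, hxa, hxa.symm, hxb, hxb.symm, hxa', hxa'.symm, hxb', hxb'.symm, hya, hya.symm, hyb, hyb.symm, hya', hya'.symm, hyb', hyb'.symm, hab, hab.symm, haa', haa'.symm, hab', hab'.symm, hba', hba'.symm, hbb', hbb'.symm, ha'b', ha'b'.symm] using fun h => hadjxa' (G.adj_symm h)
    · simpa [hxy, hxy.symm, hxa, hxa.symm, hxb, hxb.symm, hxa', hxa'.symm, hxb', hxb'.symm, hya, hya.symm, hyb, hyb.symm, hya', hya'.symm, hyb', hyb'.symm, hab, hab.symm, haa', haa'.symm, hab', hab'.symm, hba', hba'.symm, hbb', hbb'.symm, ha'b', ha'b'.symm] using hadjya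
    · simpa [hxy, hxy.symm, hxa, hxa.symm, hxb, hxb.symm, hxa', hxa'.symm, hxb', hxb'.symm, hya, hya.symm, hyb, hyb.symm, hya', hya'.symm, hyb', hyb'.symm, hab, hab.symm, haa', haa'.symm, hab', hab'.symm, hba', hba'.symm, hbb', hbb'.symm, ha'b', ha'b'.symm] using fun h => hadjya (G.adj_symm h)
    · simpa [hxy, hxy.symm, hxa, hxa.symm, hxb, hxb.symm, hxa', hxa'.symm, hxb', hxb'.symm, hya, hya.symm, hyb, hyb.symm, hya', hya'.symm, hyb', hyb'.symm, hab, hab.symm, haa', haa'.symm, hab', hab'.symm, hba', hba'.symm, hbb', hbb'.symm, ha'b', ha'b'.symm] using hadjbb'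
    · simpa [hxy, hxy.symm, hxa, hxa.symm, hxb, hxb.symm, hxa', hxa'.symm, hxb', hxb'.symm, hya, hya.symm, hyb, hyb.symm, hya', hya'.symm, hyb', hyb'.symm, hab, hab.symm, haa', haa'.symm, hab', hab'.symm, hba', hba'.symm, hbb', hbb'.symm, ha'b', ha'b'.symm] using fun h => hadjbb' (G.adj_symm h)


lemma clique_card_le (C : Finset V) (hC : ∀ p ∈ C, ∀ q ∈ C, p ≠ q → G.Adj p q) :
    C.card ≤ G.cliqueNum := by
  have hcl : G.IsClique (C : Set V) := by
    intro p hp q hq hne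
    exact hC p (Finset.mem_coe.1 hp) q (Finset.mem_coe.1 hq) hne
  exact SimpleGraph.IsClique.card_le_cliqueNum (tc := hcl)

/-- The key case: graphs with no independent triple. -/
lemma core_alpha2 [Nonempty V]
    (h3 : ∀ x y z : V, ¬G.Adj x y → ¬G.Adj x z → ¬G.Adj y z → (x = y ∨ x = z ∨ y = z)) :
    4 * G.chromaticNumber.toNat ≤ 2 * G.cliqueNum + Fintype.card V + G.maxDegree + 1 := by
  classical
  obtain ⟨f, hfmem, hfmin'⟩ := Finset.exists_min_image
    ((univ : Finset (V → V)).filter (fun g => Valid G g))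
    (fun g => (fixedSet g).card) ⟨id, by simp [valid_id]⟩
  have hfval : Valid G f := (Finset.mem_filter.1 hfmem).2
  have hfmin : ∀ g, Valid G g → (fixedSet f).card ≤ (fixedSet g).card := by
    intro g hg
    exact hfmin' g (Finset.mem_filter.2 ⟨Finset.mem_univ _, hg⟩)
  set n := Fintype.card V with hn
  set Δ := G.maxDegree with hΔ
  set U := fixedSet f with hU
  set u := U.card with hu
  have hmemU : ∀ v, v ∈ U ↔ f v = v := by
    intro v; simp [hU, fixedSet]
  -- Step A : 2 χ ≤ n + u
  have hchrom : 2 * G.chromaticNumber.toNat ≤ n + u := by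
    set e := Fintype.equivFin V with he
    set R : Finset V := univ.filter (fun v => e v ≤ e (f v)) with hR
    have hmemR : ∀ v, (if e v ≤ e (f v) then v else f v) ∈ R := by
      intro v
      by_cases h : e v ≤ e (f v)
      · simp [hR, if_pos h, h]
      · have h' : e (f v) ≤ e (f (f v)) := by
          rw [hfval.1 v]
          exact le_of_lt (lt_of_not_ge h)
        simp [hR, if_neg h, h']
    have hcol : G.Colorable R.card := by
      have C : G.Coloring {v : V // v ∈ R} := by
        refine SimpleGraph.Coloring.mk
          (fun v => (⟨if e v ≤ e (f v) then v else f v, hmemR v⟩ : {v : V // v ∈ R})) ?_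
        intro v w hadj hc
        rw [Subtype.mk.injEq] at hc
        by_cases hv : e v ≤ e (f v) <;> by_cases hw : e w ≤ e (f w)
        · rw [if_pos hv, if_pos hw] at hc
          exact hadj.ne hc
        · rw [if_pos hv, if_neg hw] at hc
          have hfw : f w ≠ w := fun h => hw (by rw [h])
          exact hfval.2 w hfw (by rw [← hc]; exact hadj.symm)
        · rw [if_neg hv, if_pos hw] at hc
          have hfv : f v ≠ v := fun h => hv (by rw [h])
          exact hfval.2 v hfv (by rw [hc]; exact hadj)
        · rw [if_neg hv, if_neg hw] at hc
          exact hadj.ne (hfval.1.injective hc)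
      have := C.colorable
      rwa [Fintype.card_coe] at this
    have hχ : G.chromaticNumber.toNat ≤ R.card := toNat_chrom_le hcol
    have hc1 : (univ.filter (fun v => ¬ f v = v)).card + u = n := by
      have h1 := Finset.card_filter_add_card_filter_not
        (s := (univ : Finset V)) (p := fun v => f v = v)
      simp only [Finset.card_univ] at h1
      have h2 : u = (univ.filter (fun v => f v = v)).card := rfl
      rw [hn]
      omega
    have hc2 : Rᶜ.card + R.card = n := by
      have h1 := Finset.card_compl (s := R)
      have h2 : R.card ≤ Fintype.card V := Finset.card_le_univ R
      rw [hn]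
      omega
    have hc3 : (univ.filter (fun v => ¬ f v = v)).card ≤ 2 * Rᶜ.card := by
      have hsub : (univ.filter (fun v => ¬ f v = v)) ⊆ Rᶜ ∪ Rᶜ.image f := by
        intro v hv
        rw [Finset.mem_filter] at hv
        by_cases hvR : v ∈ R
        · have hlt : e v < e (f v) := by
            rcases lt_or_ge (e v) (e (f v)) with h | h
            · exact h
            · rcases lt_or_eq_of_le h with h' | h'
              · exfalso
                rw [hR, Finset.mem_filter] at hvR
                exact absurd hvR.2 (not_le.2 h')
              · exact absurd (e.injective h'.symm).symm hv.2
          have hfvRc : f v ∈ Rᶜ := by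
            rw [Finset.mem_compl, hR, Finset.mem_filter]
            rw [hfval.1 v]
            push_neg
            exact fun _ => hlt
          apply Finset.mem_union_right
          rw [Finset.mem_image]
          exact ⟨f v, hfvRc, hfval.1 v⟩
        · exact Finset.mem_union_left _ (Finset.mem_compl.2 hvR)
      calc (univ.filter (fun v => ¬ f v = v)).card ≤ (Rᶜ ∪ Rᶜ.image f).card :=
            Finset.card_le_card hsub
        _ ≤ Rᶜ.card + (Rᶜ.image f).card := Finset.card_union_le _ _
        _ ≤ 2 * Rᶜ.card := by
            have := Finset.card_image_le (s := Rᶜ) (f := f)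
            omega
    omega
  -- Step B : 2 u + n ≤ 2 ω + Δ + 1
  have hKey : 2 * u + n ≤ 2 * G.cliqueNum + Δ + 1 := by
    -- the singleton set U is a clique
    have hUclq : ∀ p ∈ U, ∀ q ∈ U, p ≠ q → G.Adj p q := by
      intro p hp q hq hne
      by_contra hnadj
      exact exchange1 G hfval hfmin hne ((hmemU p).1 hp) ((hmemU q).1 hq) hnadj
    rcases Nat.eq_zero_or_pos u with hu0 | hupos
    · -- u = 0 : use the non-neighborhood of a maximum degree vertex
      obtain ⟨v₀, hv₀⟩ := SimpleGraph.exists_maximal_degree_vertex G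
      set K : Finset V := (insert v₀ (G.neighborFinset v₀))ᶜ with hK
      have hKmem : ∀ p ∈ K, p ≠ v₀ ∧ ¬ G.Adj v₀ p := by
        intro p hp
        rw [hK, Finset.mem_compl, Finset.mem_insert, SimpleGraph.mem_neighborFinset] at hp
        push_neg at hp
        exact hp
      have hKclq : K.card ≤ G.cliqueNum := by
        apply clique_card_le
        intro p hp q hq hne
        by_contra hnadj
        rcases h3 v₀ p q (hKmem p hp).2 (hKmem q hq).2 hnadj with h | h | h
        · exact (hKmem p hp).1 h.symm
        · exact (hKmem q hq).1 h.symm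
        · exact hne h
      have hKcard : K.card + (G.degree v₀ + 1) = n := by
        have h1 : K.card = Fintype.card V - (insert v₀ (G.neighborFinset v₀)).card := by
          rw [hK]; exact Finset.card_compl _
        have h2 : (insert v₀ (G.neighborFinset v₀)).card = G.degree v₀ + 1 := by
          rw [Finset.card_insert_of_notMem (by simp), SimpleGraph.card_neighborFinset_eq_degree]
        have h3' : (insert v₀ (G.neighborFinset v₀)).card ≤ Fintype.card V :=
          Finset.card_le_univ _
        rw [hn]
        omega
      have hdeg : G.degree v₀ = Δ := hv₀.symm
      omega
    · -- u ≥ 1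
      obtain ⟨x, hxU⟩ := Finset.card_pos.1 hupos
      have hfx : f x = x := (hmemU x).1 hxU
      set A : Finset V := (insert x (G.neighborFinset x))ᶜ with hA
      have hAmem : ∀ a ∈ A, a ≠ x ∧ ¬ G.Adj x a := by
        intro a ha
        rw [hA, Finset.mem_compl, Finset.mem_insert, SimpleGraph.mem_neighborFinset] at ha
        push_neg at ha
        exact ha
      have hAcard : A.card + (G.degree x + 1) = n := by
        have h1 : A.card = Fintype.card V - (insert x (G.neighborFinset x)).card := by
          rw [hA]; exact Finset.card_compl _
        have h2 : (insert x (G.neighborFinset x)).card = G.degree x + 1 := by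
          rw [Finset.card_insert_of_notMem (by simp), SimpleGraph.card_neighborFinset_eq_degree]
        have h3' : (insert x (G.neighborFinset x)).card ≤ Fintype.card V :=
          Finset.card_le_univ _
        rw [hn]
        omega
      -- every a ∈ A is paired
      have hAnofix : ∀ a ∈ A, f a ≠ a := by
        intro a ha hfa
        exact exchange1 G hfval hfmin (hAmem a ha).1.symm hfx hfa (hAmem a ha).2
      have hfa_ne_x : ∀ a ∈ A, f a ≠ x := by
        intro a ha h
        apply (hAmem a ha).1
        rw [← hfx, ← h, hfval.1]
      have hfa_notA : ∀ a ∈ A, f a ∉ A := by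
        intro a ha hfa
        rcases h3 x a (f a) (hAmem a ha).2 (hAmem _ hfa).2
          (hfval.2 a (hAnofix a ha)) with h | h | h
        · exact (hAmem a ha).1 h.symm
        · exact (hAmem _ hfa).1 h.symm
        · exact hAnofix a ha h.symm
      -- A is a clique
      have hAclq : ∀ a ∈ A, ∀ a' ∈ A, a ≠ a' → G.Adj a a' := by
        intro a ha a' ha' hne
        by_contra hnadj
        rcases h3 x a a' (hAmem a ha).2 (hAmem a' ha').2 hnadj with h | h | h
        · exact (hAmem a ha).1 h.symm
        · exact (hAmem a' ha').1 h.symm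
        · exact hne h
      set B : Finset V := A.image f with hB
      have hBcard : B.card = A.card := Finset.card_image_of_injective _ hfval.1.injective
      have hBchar : ∀ b ∈ B, b ∉ A ∧ b ≠ x ∧ f b ∈ A ∧ f b ≠ b := by
        intro b hb
        rw [hB, Finset.mem_image] at hb
        obtain ⟨a, ha, rfl⟩ := hb
        refine ⟨hfa_notA a ha, hfa_ne_x a ha, by rwa [hfval.1], ?_⟩
        rw [hfval.1]
        exact fun h => hAnofix a ha h.symm
      have hBnofixmem : ∀ b ∈ B, b ∉ U := by
        intro b hb hbU
        exact (hBchar b hb).2.2.2 ((hmemU b).1 hbU)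
      -- every b ∈ B is adjacent to everything in U
      have hBU : ∀ b ∈ B, ∀ y ∈ U, G.Adj y b := by
        intro b hb y hy
        set a := f b with ha'
        have haA : a ∈ A := (hBchar b hb).2.2.1
        have hfab : f a = b := by rw [ha', hfval.1]
        by_cases hyx : y = x
        · subst hyx
          by_contra hnadj
          rcases h3 y a b (hAmem a haA).2 hnadj
            (by rw [← hfab]; exact hfval.2 a (hAnofix a haA)) with h | h | h
          · exact (hAmem a haA).1 h.symm
          · exact (hBchar b hb).2.1 h.symm
          · rw [← hfab] at h; exact hAnofix a haA h.symm
        · by_contra hnadj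
          have hyU : f y = y := (hmemU y).1 hy
          refine exchange2 G hfval hfmin hfx hyU hfab ?_ ?_ ?_ ?_ ?_ ?_
            (hAmem a haA).2 hnadj
          · exact fun h => hyx h.symm
          · exact fun h => (hAmem a haA).1 h.symm
          · exact fun h => (hBchar b hb).2.1 h.symm
          · exact fun h => hAnofix a haA (by rw [← h, hyU, h])
          · exact fun h => (hBchar b hb).2.2.2 (by rw [← h, hyU, h])
          · rw [← hfab]; exact fun h => hAnofix a haA h.symm
      set B₀ : Finset V := B.filter (fun b => ∃ b' ∈ B, b' ≠ b ∧ ¬ G.Adj b b') with hB₀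
      set B₁ : Finset V := B \ B₀ with hB₁
      have hB₁adj : ∀ b ∈ B₁, ∀ b' ∈ B, b' ≠ b → G.Adj b b' := by
        intro b hb b' hb' hne
        rw [hB₁, Finset.mem_sdiff, hB₀, Finset.mem_filter] at hb
        by_contra hnadj
        exact hb.2 ⟨hb.1, b', hb', hne, hnadj⟩
      set A₀ : Finset V := B₀.image f with hA₀
      have hA₀card : A₀.card = B₀.card := Finset.card_image_of_injective _ hfval.1.injective
      have hA₀sub : A₀ ⊆ A := by
        intro a ha
        rw [hA₀, Finset.mem_image] at ha
        obtain ⟨b, hb, rfl⟩ := ha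
        exact (hBchar b (Finset.filter_subset _ _ hb)).2.2.1
      -- vertices of U ∖ {x} are adjacent to all of A₀
      have hUA₀ : ∀ y ∈ U, y ≠ x → ∀ a ∈ A₀, G.Adj y a := by
        intro y hy hyx a haA₀
        by_contra hnadj
        rw [hA₀, Finset.mem_image] at haA₀
        obtain ⟨b, hbB₀, rfl⟩ := haA₀
        rw [hB₀, Finset.mem_filter] at hbB₀
        obtain ⟨hbB, b', hb'B, hb'ne, hnadjbb'⟩ := hbB₀
        set a := f b with ha'
        set a' := f b' with ha''
        have haA : a ∈ A := (hBchar b hbB).2.2.1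
        have ha'A : a' ∈ A := (hBchar b' hb'B).2.2.1
        have hfab : f a = b := by rw [ha', hfval.1]
        have hfa'b' : f a' = b' := by rw [ha'', hfval.1]
        have hyU : f y = y := (hmemU y).1 hy
        -- all distinctness facts
        have d_ab : a ≠ b := fun h => hAnofix a haA (by rw [hfab, h])
        have d_a'b' : a' ≠ b' := fun h => hAnofix a' ha'A (by rw [hfa'b', h])
        have d_aa' : a ≠ a' := fun h => hb'ne (by rw [← hfab, ← hfa'b', h])
        have d_ab' : a ≠ b' := fun h => (hBchar b' hb'B).1 (h ▸ haA)
        have d_ba' : b ≠ a' := fun h => (hBchar b hbB).1 (h.symm ▸ ha'A)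
        refine exchange3 G hfval hfmin hfx hyU hfab hfa'b'
          (fun h => hyx h.symm)
          (fun h => (hAmem a haA).1 h.symm)
          (fun h => (hBchar b hbB).2.1 h.symm)
          (fun h => (hAmem a' ha'A).1 h.symm)
          (fun h => (hBchar b' hb'B).2.1 h.symm)
          (fun h => hAnofix a haA (by rw [← h, hyU, h]))
          (fun h => (hBchar b hbB).2.2.2 (by rw [← h, hyU, h]))
          (fun h => hAnofix a' ha'A (by rw [← h, hyU, h]))
          (fun h => (hBchar b' hb'B).2.2.2 (by rw [← h, hyU, h]))
          d_ab d_aa' d_ab' d_ba' hb'ne.symm d_a'b'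
          (hAmem a' ha'A).2 hnadj hnadjbb'
      -- first clique : (U ∖ {x}) ∪ A₀
      have hC1 : (u - 1) + B₀.card ≤ G.cliqueNum := by
        have hcard : ((U.erase x) ∪ A₀).card = (u - 1) + B₀.card := by
          rw [Finset.card_union_of_disjoint, Finset.card_erase_of_mem hxU, hA₀card]
          rw [Finset.disjoint_left]
          intro p hp hpA₀
          have hpU : p ∈ U := Finset.mem_of_mem_erase hp
          exact hAnofix p (hA₀sub hpA₀) ((hmemU p).1 hpU)
        rw [← hcard]
        apply clique_card_le
        intro p hp q hq hne
        rcases Finset.mem_union.1 hp with hp' | hp' <;> rcases Finset.mem_union.1 hq with hq' | hq'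
        · exact hUclq p (Finset.mem_of_mem_erase hp') q (Finset.mem_of_mem_erase hq') hne
        · exact hUA₀ p (Finset.mem_of_mem_erase hp') (Finset.ne_of_mem_erase hp') q hq'
        · exact (hUA₀ q (Finset.mem_of_mem_erase hq') (Finset.ne_of_mem_erase hq') p hp').symm
        · exact hAclq p (hA₀sub hp') q (hA₀sub hq') hne
      -- second clique
      rcases Finset.eq_empty_or_nonempty B₀ with hB₀e | ⟨bs, hbs⟩
      · -- B₀ empty : U ∪ B is a clique
        have hBgood : ∀ b ∈ B, ∀ b' ∈ B, b' ≠ b → G.Adj b b' := by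
          intro b hb b' hb' hne
          apply hB₁adj b _ b' hb' hne
          rw [hB₁, hB₀e]
          simpa using hb
        have hcard : (U ∪ B).card = u + A.card := by
          rw [Finset.card_union_of_disjoint, hBcard]
          rw [Finset.disjoint_left]
          exact fun p hp hpB => hBnofixmem p hpB hp
        have hC2 : u + A.card ≤ G.cliqueNum := by
          rw [← hcard]
          apply clique_card_le
          intro p hp q hq hne
          rcases Finset.mem_union.1 hp with hp' | hp' <;> rcases Finset.mem_union.1 hq with hq' | hq'
          · exact hUclq p hp' q hq' hne
          · exact (hBU q hq' p hp')
          · exact (hBU p hp' q hq').symm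
          · exact hBgood p hp' q hq' hne.symm
        have hdegx : G.degree x ≤ Δ := G.degree_le_maxDegree x
        omega
      · -- B₀ nonempty : insert bs (U ∪ B₁) is a clique
        have hbsB : bs ∈ B := Finset.filter_subset _ _ hbs
        have hbsnotB₁ : bs ∉ B₁ := by
          rw [hB₁, Finset.mem_sdiff]
          exact fun h => h.2 hbs
        have hcard : (insert bs (U ∪ B₁)).card = 1 + (u + B₁.card) := by
          rw [Finset.card_insert_of_notMem, Finset.card_union_of_disjoint]
          · omega
          · rw [Finset.disjoint_left]
            intro p hp hpB₁
            exact hBnofixmem p (Finset.sdiff_subset hpB₁) hp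
          · rw [Finset.mem_union]
            push_neg
            exact ⟨hBnofixmem bs hbsB, hbsnotB₁⟩
        have hC2 : 1 + (u + B₁.card) ≤ G.cliqueNum := by
          rw [← hcard]
          apply clique_card_le
          intro p hp q hq hne
          rcases Finset.mem_insert.1 hp with rfl | hp'
          · rcases Finset.mem_insert.1 hq with rfl | hq'
            · exact absurd rfl hne
            · rcases Finset.mem_union.1 hq' with hq'' | hq''
              · exact (hBU p hbsB q hq'').symm
              · exact (hB₁adj q hq'' p hbsB hne).symm
          · rcases Finset.mem_insert.1 hq with rfl | hq'
            · rcases Finset.mem_union.1 hp' with hp'' | hp''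
              · exact hBU q hbsB p hp''
              · exact hB₁adj p hp'' q hbsB hne.symm
            · rcases Finset.mem_union.1 hp' with hp'' | hp'' <;>
                rcases Finset.mem_union.1 hq' with hq'' | hq''
              · exact hUclq p hp'' q hq'' hne
              · exact hBU q (Finset.sdiff_subset hq'') p hp''
              · exact (hBU p (Finset.sdiff_subset hp'') q hq'').symm
              · exact hB₁adj p hp'' q (Finset.sdiff_subset hq'') hne.symm
        have hB₁card : B₁.card + B₀.card = A.card := by
          have hsub : B₀ ⊆ B := by rw [hB₀]; exact Finset.filter_subset _ _
          have h2 : B₁.card = B.card - B₀.card := by rw [hB₁]; exact Finset.card_sdiff_of_subset hsub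
          have h1 : B₀.card ≤ B.card := Finset.card_le_card hsub
          omega
        have hdegx : G.degree x ≤ Δ := G.degree_le_maxDegree x
        omega
  omega

end Core2


section Main

universe u

lemma main_nat : ∀ (n : ℕ) (V : Type u) [Fintype V] [Nonempty V] (G : SimpleGraph V)
    [DecidableRel G.Adj], Fintype.card V = n →
    4 * G.chromaticNumber.toNat ≤ 2 * G.cliqueNum + Fintype.card V + G.maxDegree + 1 := by
  intro n
  induction n using Nat.strong_induction_on with
  | _ n ih =>
    intro V _ _ G _ hcard
    classical
    have hone : 1 ≤ G.cliqueNum := by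
      obtain ⟨v⟩ := ‹Nonempty V›
      have h1 : ({v} : Finset V).card ≤ G.cliqueNum := by
        apply clique_card_le
        intro p hp q hq hne
        rw [Finset.mem_singleton] at hp hq
        subst hp; subst hq
        exact absurd rfl hne
      simpa using h1
    have hnpos : 1 ≤ Fintype.card V := Fintype.card_pos
    -- helper : handle the case of an independent set S with complement processing
    have process : ∀ (S : Finset V), (∀ a ∈ S, ∀ b ∈ S, a ≠ b → ¬ G.Adj a b) →
        ∀ v₀ : V, v₀ ∉ S →
        4 * (G.comap (fun v : {v : V // v ∉ S} => (v : V))).chromaticNumber.toNat + 4 ≥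
          4 * G.chromaticNumber.toNat ∧
        Fintype.card {v : V // v ∉ S} = Fintype.card V - S.card ∧
        (G.comap (fun v : {v : V // v ∉ S} => (v : V))).cliqueNum ≤ G.cliqueNum ∧
        (G.comap (fun v : {v : V // v ∉ S} => (v : V))).maxDegree ≤ G.maxDegree := by
      intro S hS v₀ hv₀
      have hne : Nonempty {v : V // v ∉ S} := ⟨⟨v₀, hv₀⟩⟩
      refine ⟨?_, ?_, cliqueNum_comap_le G S, maxDegree_comap_le G S⟩
      · have hcol' : (G.comap (fun v : {v : V // v ∉ S} => (v : V))).Colorable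
            ((G.comap (fun v : {v : V // v ∉ S} => (v : V))).chromaticNumber.toNat) :=
          SimpleGraph.colorable_chromaticNumber
            (SimpleGraph.colorable_of_fintype _)
        have := toNat_chrom_le (colorable_extend G S hS hcol')
        omega
      · have h1 : Fintype.card {v : V // ¬ v ∈ S} =
            Fintype.card V - Fintype.card {v : V // v ∈ S} :=
          Fintype.card_subtype_compl _
        have h2 : Fintype.card {v : V // v ∈ S} = S.card := Fintype.card_coe S
        rw [h1, h2]
    by_cases h4 : ∃ S : Finset V, S.card = 4 ∧ ∀ a ∈ S, ∀ b ∈ S, a ≠ b → ¬ G.Adj a b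
    · obtain ⟨S, hcard4, hSind⟩ := h4
      by_cases hVS : ∃ v₀ : V, v₀ ∉ S
      · obtain ⟨v₀, hv₀⟩ := hVS
        have hne : Nonempty {v : V // v ∉ S} := ⟨⟨v₀, hv₀⟩⟩
        obtain ⟨hchrom, hcard', hclq, hdeg⟩ := process S hSind v₀ hv₀
        have hn4 : Fintype.card {v : V // v ∉ S} = n - 4 := by omega
        have hSle : S.card ≤ Fintype.card V := Finset.card_le_univ S
        have hIH := ih (n - 4) (by omega) {v : V // v ∉ S}
          (G.comap (fun v : {v : V // v ∉ S} => (v : V))) hn4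
        have hpos' : 1 ≤ Fintype.card {v : V // v ∉ S} := Fintype.card_pos
        omega
      · -- S is everything : G has no edges
        push_neg at hVS
        have hbot : G = ⊥ := by
          ext v w
          simp only [SimpleGraph.bot_adj, iff_false]
          intro hadj
          exact hSind v (hVS v) w (hVS w) hadj.ne hadj
        have : G.chromaticNumber = 1 := by rw [hbot]; exact SimpleGraph.chromaticNumber_bot
        rw [this]
        simp only [ENat.toNat_one]
        omega
    by_cases h3' : ∃ S : Finset V, S.card = 3 ∧ ∀ a ∈ S, ∀ b ∈ S, a ≠ b → ¬ G.Adj a b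
    · obtain ⟨S, hcard3, hSind⟩ := h3'
      by_cases hVS : ∃ v₀ : V, v₀ ∉ S
      · obtain ⟨v₀, hv₀⟩ := hVS
        have hne : Nonempty {v : V // v ∉ S} := ⟨⟨v₀, hv₀⟩⟩
        -- every vertex outside S has a neighbor in S
        have hnb : ∀ v : {v : V // v ∉ S}, ∃ w ∈ S, G.Adj (v : V) w := by
          intro v
          by_contra hno
          push_neg at hno
          apply h4
          refine ⟨insert (v : V) S, ?_, ?_⟩
          · rw [Finset.card_insert_of_notMem v.2, hcard3]
          · intro a ha b hb hab
            rcases Finset.mem_insert.1 ha with rfl | ha'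
            · rcases Finset.mem_insert.1 hb with rfl | hb'
              · exact absurd rfl hab
              · exact hno b hb'
            · rcases Finset.mem_insert.1 hb with rfl | hb'
              · exact fun h => hno a ha' h.symm
              · exact hSind a ha' b hb' hab
        obtain ⟨hchrom, hcard', hclq, hdeg⟩ := process S hSind v₀ hv₀
        have hdeg2 := maxDegree_comap_lt G S hnb
        have hn3 : Fintype.card {v : V // v ∉ S} = n - 3 := by omega
        have hSle : S.card ≤ Fintype.card V := Finset.card_le_univ S
        have hIH := ih (n - 3) (by omega) {v : V // v ∉ S}
          (G.comap (fun v : {v : V // v ∉ S} => (v : V))) hn3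
        have hpos' : 1 ≤ Fintype.card {v : V // v ∉ S} := Fintype.card_pos
        omega
      · push_neg at hVS
        have hbot : G = ⊥ := by
          ext v w
          simp only [SimpleGraph.bot_adj, iff_false]
          intro hadj
          exact hSind v (hVS v) w (hVS w) hadj.ne hadj
        have : G.chromaticNumber = 1 := by rw [hbot]; exact SimpleGraph.chromaticNumber_bot
        rw [this]
        simp only [ENat.toNat_one]
        omega
    · -- no independent triple : the core case
      apply core_alpha2
      intro x y z hxy hxz hyz
      by_contra hne
      push_neg at hne
      obtain ⟨hne1, hne2, hne3⟩ := hne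
      apply h3'
      refine ⟨{x, y, z}, ?_, ?_⟩
      · rw [Finset.card_insert_of_notMem (by simp [hne1, hne2]),
          Finset.card_insert_of_notMem (by simp [hne3]), Finset.card_singleton]
      · intro a ha b hb hab
        have hmem : ∀ c, c ∈ ({x, y, z} : Finset V) → c = x ∨ c = y ∨ c = z := by
          intro c hc; simpa [Finset.mem_insert, Finset.mem_singleton] using hc
        rcases hmem a ha with rfl | rfl | rfl <;> rcases hmem b hb with rfl | rfl | rfl
        · exact absurd rfl hab
        · exact hxy
        · exact hxz
        · exact fun h => hxy h.symm
        · exact absurd rfl hab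
        · exact hyz
        · exact fun h => hxz h.symm
        · exact fun h => hyz h.symm
        · exact absurd rfl hab

end Main
end ChromBound

/-- Let `G` be a finite simple graph.  Then
`χ(G) ≤ (1/2) (ω(G) + (|G| + Δ(G) + 1)/2)`. -/
theorem chromatic_bound_clique_maxDegree_order {V : Type*} [Fintype V] [Nonempty V]
    (G : SimpleGraph V) [DecidableRel G.Adj] :
    (G.chromaticNumber.toNat : ℝ) ≤
      (1 / 2) * ((G.cliqueNum : ℝ) +
        ((Fintype.card V : ℝ) + (G.maxDegree : ℝ) + 1) / 2) := by
  classical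
  have h := ChromBound.main_nat (Fintype.card V) V G rfl
  have hreal : 4 * (G.chromaticNumber.toNat : ℝ) ≤
      2 * (G.cliqueNum : ℝ) + (Fintype.card V : ℝ) + (G.maxDegree : ℝ) + 1 := by
    exact_mod_cast h
  linarith
end

section
/- Let G be a finite simple graph, let K be a cut-set of vertices in the complement graph of G (i.e., a set of vertices whose removal disconnects the complement of G), and let H be an induced subgraph of G. Then χ(G) ≤ (1/2)(ω(G) + Δ(G) + 1) + (4χ(G[K]) + 3χ(H ∖ K) − |H ∖ K|)/4, where G[K] is the subgraph of G induced on K and H ∖ K is the subgraph of H induced on the vertices of H not in K. -/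
/-- A finite set of vertices `K` is a cut-set of a simple graph `G` if the graph
induced on the remaining vertices is disconnected (there are two remaining
vertices joined by no path). -/
def SimpleGraph.IsCutSet {V : Type*} (G : SimpleGraph V) (K : Finset V) : Prop :=
  ¬ (G.induce ((K : Set V)ᶜ)).Preconnected


open Finset

set_option linter.unusedSectionVars false
set_option maxHeartbeats 1000000

namespace CB

variable {V : Type*} [Fintype V] [DecidableEq V] (G : SimpleGraph V) [DecidableRel G.Adj]

/-- chromatic number of the subgraph induced on a finset -/
noncomputable def chiOn (W : Finset V) : ℕ :=
  (G.induce (W : Set V)).chromaticNumber.toNat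

lemma chiOn_colorable (W : Finset V) : (G.induce (W : Set V)).Colorable (chiOn G W) :=
  SimpleGraph.colorable_chromaticNumber_of_fintype _

lemma chiOn_le_of_colorable {W : Finset V} {n : ℕ}
    (h : (G.induce (W : Set V)).Colorable n) : chiOn G W ≤ n := by
  have := h.chromaticNumber_le
  have hne : (G.induce (W : Set V)).chromaticNumber ≠ ⊤ :=
    (lt_of_le_of_lt this (by exact_mod_cast WithTop.coe_lt_top n)).ne
  exact_mod_cast ENat.toNat_le_of_le_coe this

/-- a "coloring function" bound: if `f` distinguishes adjacent vertices of `W`,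
then `chiOn W ≤ |f '' W|`. -/
lemma chiOn_le_card_image {W : Finset V} {β : Type*} [DecidableEq β] (f : V → β)
    (hf : ∀ v ∈ W, ∀ w ∈ W, G.Adj v w → f v ≠ f w) :
    chiOn G W ≤ (W.image f).card := by
  classical
  apply chiOn_le_of_colorable
  have C : (G.induce (W : Set V)).Coloring ↥(W.image f) := by
    refine SimpleGraph.Coloring.mk
      (fun x => ⟨f x.1, mem_image.2 ⟨x.1, by simpa using x.2, rfl⟩⟩) ?_
    rintro ⟨v, hv⟩ ⟨w, hw⟩ hadj h
    exact hf v (by simpa using hv) w (by simpa using hw) hadj (by simpa using h)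
  simpa using C.colorable

lemma chiOn_empty : chiOn G ∅ = 0 := by
  have : IsEmpty ↥((∅ : Finset V) : Set V) := by simp
  simp [chiOn, SimpleGraph.chromaticNumber_eq_zero_of_isEmpty]

lemma chiOn_le_card (W : Finset V) : chiOn G W ≤ W.card := by
  refine le_trans (chiOn_le_card_image G (fun v => v) ?_) ?_
  · intro v _ w _ hadj h; exact hadj.ne h
  · simp [Finset.image_id]

lemma chiOn_mono {S W : Finset V} (h : S ⊆ W) : chiOn G S ≤ chiOn G W := by
  obtain ⟨c⟩ := chiOn_colorable G W
  apply chiOn_le_of_colorable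
  exact ⟨SimpleGraph.Coloring.mk (fun x => c ⟨x.1, by exact_mod_cast h (by exact_mod_cast x.2)⟩)
    (fun {v w} hadj => c.valid hadj)⟩

lemma chiOn_indep {W : Finset V} (h : ∀ v ∈ W, ∀ w ∈ W, ¬ G.Adj v w) :
    chiOn G W ≤ 1 := by
  refine le_trans (chiOn_le_card_image G (fun _ => (0 : ℕ)) ?_) ?_
  · intro v hv w hw hadj _; exact h v hv w hw hadj
  · calc (W.image fun _ => (0:ℕ)).card ≤ ({0} : Finset ℕ).card := by
          apply card_le_card; intro x hx
          simp only [mem_image] at hx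
          obtain ⟨_, _, rfl⟩ := hx; simp
        _ = 1 := card_singleton _

/-- partitioned coloring: `χ(W₁ ∪ W₂) ≤ χ(W₁) + χ(W₂)`. -/
lemma chiOn_union_le (W₁ W₂ : Finset V) :
    chiOn G (W₁ ∪ W₂) ≤ chiOn G W₁ + chiOn G W₂ := by
  obtain ⟨c₁⟩ := chiOn_colorable G W₁
  obtain ⟨c₂⟩ := chiOn_colorable G W₂
  apply chiOn_le_of_colorable
  set n₁ := chiOn G W₁
  set n₂ := chiOn G W₂
  have hmem : ∀ x : ↥((W₁ ∪ W₂ : Finset V) : Set V), x.1 ∉ W₁ → x.1 ∈ W₂ := by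
    rintro ⟨x, hx⟩ h
    simp only [Finset.coe_union, Set.mem_union, Finset.mem_coe] at hx
    exact hx.resolve_left h
  refine ⟨SimpleGraph.Coloring.mk (fun x =>
    if h : x.1 ∈ W₁ then ⟨(c₁ ⟨x.1, by exact_mod_cast h⟩ : Fin n₁).val, by omega⟩
    else (⟨n₁ + (c₂ ⟨x.1, by exact_mod_cast hmem x h⟩ : Fin n₂).val, by omega⟩ : Fin (n₁ + n₂))) ?_⟩
  rintro ⟨v, hv⟩ ⟨w, hw⟩ hadj h
  have hGadj : G.Adj v w := hadj
  dsimp only at h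
  split_ifs at h with h1 h2 h2
  · have hval := congrArg Fin.val h
    simp only at hval
    have : (c₁ ⟨v, by exact_mod_cast h1⟩) = (c₁ ⟨w, by exact_mod_cast h2⟩) := Fin.ext hval
    exact c₁.valid (show (G.induce (W₁ : Set V)).Adj ⟨v, by exact_mod_cast h1⟩
      ⟨w, by exact_mod_cast h2⟩ from hGadj) this
  · have hval := congrArg Fin.val h
    simp only at hval
    have := (c₁ ⟨v, by exact_mod_cast h1⟩).isLt
    omega
  · have hval := congrArg Fin.val h
    simp only at hval
    have := (c₁ ⟨w, by exact_mod_cast h2⟩).isLt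
    omega
  · have hval := congrArg Fin.val h
    simp only at hval
    have : (c₂ ⟨v, by exact_mod_cast hmem ⟨v, hv⟩ h1⟩) =
        (c₂ ⟨w, by exact_mod_cast hmem ⟨w, hw⟩ h2⟩) := Fin.ext (by omega)
    exact c₂.valid (show (G.induce (W₂ : Set V)).Adj ⟨v, by exact_mod_cast hmem ⟨v, hv⟩ h1⟩
      ⟨w, by exact_mod_cast hmem ⟨w, hw⟩ h2⟩ from hGadj) this

/-- greedy extension: if `v` has fewer than `n` neighbours in `S`, a proper
`n`-coloring of `S` extends to `insert v S`. -/
lemma colorable_insert_of_degree_lt {S : Finset V} {v : V} {n : ℕ}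
    (hd : ((G.neighborFinset v) ∩ S).card < n)
    (hc : (G.induce (S : Set V)).Colorable n) :
    (G.induce ((insert v S : Finset V) : Set V)).Colorable n := by
  obtain ⟨c⟩ := hc
  set U : Finset (Fin n) := ((G.neighborFinset v ∩ S).attach).image
    (fun w => c ⟨w.1, by
      have := w.2; simp only [mem_inter] at this; exact_mod_cast this.2⟩) with hU
  have hUcard : U.card < n := by
    calc U.card ≤ (G.neighborFinset v ∩ S).attach.card := card_image_le
    _ = (G.neighborFinset v ∩ S).card := card_attach
    _ < n := hd
  have hUne : U ≠ univ := by
    intro h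
    rw [h, card_univ, Fintype.card_fin] at hUcard
    omega
  obtain ⟨a, -, ha⟩ := exists_of_ssubset (ssubset_univ_iff.mpr hUne)
  have hmem : ∀ x : ↥((insert v S : Finset V) : Set V), x.1 ≠ v → x.1 ∈ S := by
    rintro ⟨x, hx⟩ h
    simp only [coe_insert, Set.mem_insert_iff, mem_coe] at hx
    exact hx.resolve_left h
  refine ⟨SimpleGraph.Coloring.mk (fun x =>
    if h : x.1 = v then a else c ⟨x.1, by exact_mod_cast hmem x h⟩) ?_⟩
  rintro ⟨x, hx⟩ ⟨y, hy⟩ hadj h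
  have hGadj : G.Adj x y := hadj
  dsimp only at h
  split_ifs at h with h1 h2 h2
  · subst h1; exact (hGadj.ne (h2.symm)).elim
  · apply ha
    rw [h]
    subst h1
    refine mem_image.2 ⟨⟨y, ?_⟩, mem_attach _ _, rfl⟩
    simp only [mem_inter, SimpleGraph.mem_neighborFinset]
    exact ⟨hGadj, hmem ⟨y, hy⟩ h2⟩
  · apply ha
    rw [← h]
    subst h2
    refine mem_image.2 ⟨⟨x, ?_⟩, mem_attach _ _, rfl⟩
    simp only [mem_inter, SimpleGraph.mem_neighborFinset]
    exact ⟨hGadj.symm, hmem ⟨x, hx⟩ h1⟩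
  · exact c.valid (show (G.induce (S : Set V)).Adj ⟨x, by exact_mod_cast hmem ⟨x, hx⟩ h1⟩
      ⟨y, by exact_mod_cast hmem ⟨y, hy⟩ h2⟩ from hGadj) h

/-- join split: if everything in `SA` is adjacent to everything in `SB` then
`χ(SA) + χ(SB) ≤ χ(SA ∪ SB)`. -/
lemma chiOn_add_chiOn_le_of_cross {SA SB : Finset V}
    (hcross : ∀ a ∈ SA, ∀ b ∈ SB, G.Adj a b) :
    chiOn G SA + chiOn G SB ≤ chiOn G (SA ∪ SB) := by
  set n := chiOn G (SA ∪ SB) with hn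
  obtain ⟨c⟩ := chiOn_colorable G (SA ∪ SB)
  set f : V → ℕ := fun w =>
    if h : w ∈ ((SA ∪ SB : Finset V) : Set V) then (c ⟨w, h⟩).val else 0 with hf
  have hmemA : ∀ a ∈ SA, a ∈ ((SA ∪ SB : Finset V) : Set V) := by
    intro a ha; simp only [coe_union, Set.mem_union, mem_coe]; exact Or.inl ha
  have hmemB : ∀ b ∈ SB, b ∈ ((SA ∪ SB : Finset V) : Set V) := by
    intro b hb; simp only [coe_union, Set.mem_union, mem_coe]; exact Or.inr hb
  have hfval : ∀ w (h : w ∈ ((SA ∪ SB : Finset V) : Set V)), f w = (c ⟨w, h⟩).val := by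
    intro w h; simp only [hf, dif_pos h]
  have hproper : ∀ x y, x ∈ ((SA ∪ SB : Finset V) : Set V) →
      y ∈ ((SA ∪ SB : Finset V) : Set V) → G.Adj x y → f x ≠ f y := by
    intro x y hx hy hadj h
    rw [hfval x hx, hfval y hy] at h
    exact c.valid (show (G.induce ((SA ∪ SB : Finset V) : Set V)).Adj ⟨x, hx⟩ ⟨y, hy⟩
      from hadj) (Fin.ext h)
  have hA : chiOn G SA ≤ (SA.image f).card :=
    chiOn_le_card_image G f (fun a ha b hb hadj =>
      hproper a b (hmemA a ha) (hmemA b hb) hadj)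
  have hB : chiOn G SB ≤ (SB.image f).card :=
    chiOn_le_card_image G f (fun a ha b hb hadj =>
      hproper a b (hmemB a ha) (hmemB b hb) hadj)
  have hdisj : Disjoint (SA.image f) (SB.image f) := by
    rw [disjoint_left]
    intro x hxA hxB
    obtain ⟨a, ha, rfl⟩ := mem_image.1 hxA
    obtain ⟨b, hb, hba⟩ := mem_image.1 hxB
    exact hproper b a (hmemB b hb) (hmemA a ha) (hcross a ha b hb).symm hba
  have hsub : SA.image f ∪ SB.image f ⊆ Finset.range n := by
    intro x hx
    rcases mem_union.1 hx with hx | hx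
    · obtain ⟨a, ha, rfl⟩ := mem_image.1 hx
      rw [hfval a (hmemA a ha)]
      exact mem_range.2 (Fin.is_lt _)
    · obtain ⟨b, hb, rfl⟩ := mem_image.1 hx
      rw [hfval b (hmemB b hb)]
      exact mem_range.2 (Fin.is_lt _)
  calc chiOn G SA + chiOn G SB ≤ (SA.image f).card + (SB.image f).card := add_le_add hA hB
    _ = (SA.image f ∪ SB.image f).card := (card_union_of_disjoint hdisj).symm
    _ ≤ (Finset.range n).card := card_le_card hsub
    _ = n := card_range n

/-- degree of `v` towards `W` -/
def degOn (W : Finset V) (v : V) : ℕ := ((G.neighborFinset v) ∩ W).card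

/-- maximum degree within `W` -/
def maxDegOn (W : Finset V) : ℕ := W.sup (degOn G W)

lemma degOn_le_maxDegOn {W : Finset V} {v : V} (h : v ∈ W) : degOn G W v ≤ maxDegOn G W :=
  le_sup h

lemma degOn_mono {S W : Finset V} (h : S ⊆ W) (v : V) : degOn G S v ≤ degOn G W v :=
  card_le_card (inter_subset_inter le_rfl h)

lemma maxDegOn_mono {S W : Finset V} (h : S ⊆ W) : maxDegOn G S ≤ maxDegOn G W := by
  apply Finset.sup_le
  intro v hv
  exact (degOn_mono G h v).trans (degOn_le_maxDegOn G (h hv))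

/-- greedy bound: `χ(W) ≤ Δ(W) + 1`. -/
lemma chiOn_le_maxDegOn_succ (W : Finset V) : chiOn G W ≤ maxDegOn G W + 1 := by
  induction W using Finset.strongInduction with
  | _ W ih =>
    rcases W.eq_empty_or_nonempty with rfl | ⟨v, hv⟩
    · simp [chiOn_empty]
    · have hW : W = insert v (W.erase v) := (insert_erase hv).symm
      have hss : W.erase v ⊂ W := erase_ssubset hv
      have h1 : chiOn G (W.erase v) ≤ maxDegOn G (W.erase v) + 1 := ih _ hss
      have h2 : chiOn G (W.erase v) ≤ maxDegOn G W + 1 :=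
        h1.trans (by have := maxDegOn_mono G hss.subset; omega)
      have hdeg : ((G.neighborFinset v) ∩ (W.erase v)).card < maxDegOn G W + 1 := by
        have : ((G.neighborFinset v) ∩ (W.erase v)).card ≤ degOn G W v :=
          card_le_card (inter_subset_inter le_rfl (erase_subset _ _))
        have := degOn_le_maxDegOn G hv
        omega
      have hcol := colorable_insert_of_degree_lt G hdeg
        ((chiOn_colorable G (W.erase v)).mono h2)
      have := chiOn_le_of_colorable G hcol
      rwa [← hW] at this

/-- clique number within `W` -/
def omegaOn (W : Finset V) : ℕ :=
  (W.powerset.filter fun t : Finset V => G.IsClique (t : Set V)).sup card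

lemma le_omegaOn {W t : Finset V} (hsub : t ⊆ W) (hc : G.IsClique (t : Set V)) :
    t.card ≤ omegaOn G W :=
  le_sup (mem_filter.2 ⟨mem_powerset.2 hsub, hc⟩)

lemma omegaOn_mono {S W : Finset V} (h : S ⊆ W) : omegaOn G S ≤ omegaOn G W := by
  apply Finset.sup_le
  intro t ht
  rw [mem_filter, mem_powerset] at ht
  exact le_omegaOn G (ht.1.trans h) ht.2

lemma exists_omegaOn (W : Finset V) :
    ∃ t, t ⊆ W ∧ G.IsClique (t : Set V) ∧ t.card = omegaOn G W := by
  have hne : (W.powerset.filter fun t : Finset V => G.IsClique (t : Set V)).Nonempty :=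
    ⟨∅, mem_filter.2 ⟨mem_powerset.2 (empty_subset _), by simp⟩⟩
  obtain ⟨t, ht, hcard⟩ := Finset.exists_mem_eq_sup _ hne card
  rw [mem_filter, mem_powerset] at ht
  exact ⟨t, ht.1, ht.2, hcard.symm⟩

/-- an "antimatching" on `W`: an involution of `W` pairing up non-adjacent vertices. -/
def AntiM (W : Finset V) (f : V → V) : Prop :=
  (∀ v ∈ W, f v ∈ W) ∧ (∀ v ∈ W, f (f v) = v) ∧
    (∀ v ∈ W, f v ≠ v → ¬ G.Adj v (f v)) ∧ (∀ v, v ∉ W → f v = v)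

lemma antiM_id (W : Finset V) : AntiM G W id :=
  ⟨fun v hv => hv, fun _ _ => rfl, fun _ _ h => absurd rfl h, fun _ _ => rfl⟩

instance (W : Finset V) : DecidablePred (AntiM G W) := fun f => by
  unfold AntiM; infer_instance

/-- number of non-fixed points -/
def muF (W : Finset V) (f : V → V) : ℕ := (W.filter fun v => f v ≠ v).card

lemma exists_max_antiM (W : Finset V) :
    ∃ f, AntiM G W f ∧ ∀ g, AntiM G W g → muF W g ≤ muF W f := by
  obtain ⟨f, hf, hmax⟩ := Finset.exists_max_image
    ((univ : Finset (V → V)).filter (AntiM G W)) (muF W)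
    ⟨id, mem_filter.2 ⟨mem_univ _, antiM_id G W⟩⟩
  exact ⟨f, (mem_filter.1 hf).2, fun g hg => hmax g (mem_filter.2 ⟨mem_univ _, hg⟩)⟩

lemma maxAntiM_fixed_clique {W : Finset V} {f : V → V}
    (hf : AntiM G W f) (hmax : ∀ g, AntiM G W g → muF W g ≤ muF W f)
    {a b : V} (ha : a ∈ W) (hb : b ∈ W) (hfa : f a = a) (hfb : f b = b)
    (hab : a ≠ b) : G.Adj a b := by
  by_contra hnadj
  obtain ⟨hW, hinv, hnadjf, hout⟩ := hf
  set g : V → V := fun v => if v = a then b else if v = b then a else f v with hg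
  have hgval : ∀ v, v ≠ a → v ≠ b → g v = f v := by
    intro v h1 h2; simp [hg, h1, h2]
  have hga : g a = b := by simp [hg]
  have hgb : g b = a := by simp [hg, hab.symm]
  have hfne : ∀ v ∈ W, v ≠ a → v ≠ b → f v ≠ a ∧ f v ≠ b := by
    intro v hv h1 h2
    constructor
    · intro h; exact h1 (by rw [← hinv v hv, h, hfa])
    · intro h; exact h2 (by rw [← hinv v hv, h, hfb])
  have hgAnti : AntiM G W g := by
    refine ⟨?_, ?_, ?_, ?_⟩
    · intro v hv
      by_cases h1 : v = a
      · subst h1; rw [hga]; exact hb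
      by_cases h2 : v = b
      · subst h2; rw [hgb]; exact ha
      rw [hgval v h1 h2]; exact hW v hv
    · intro v hv
      by_cases h1 : v = a
      · subst h1; rw [hga, hgb]
      by_cases h2 : v = b
      · subst h2; rw [hgb, hga]
      rw [hgval v h1 h2]
      obtain ⟨hna, hnb⟩ := hfne v hv h1 h2
      rw [hgval (f v) hna hnb]
      exact hinv v hv
    · intro v hv hne
      by_cases h1 : v = a
      · subst h1; rw [hga]; exact hnadj
      by_cases h2 : v = b
      · subst h2; rw [hgb]; intro h; exact hnadj h.symm
      rw [hgval v h1 h2] at hne ⊢; exact hnadjf v hv hne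
    · intro v hv
      have h1 : v ≠ a := fun h => hv (h ▸ ha)
      have h2 : v ≠ b := fun h => hv (h ▸ hb)
      rw [hgval v h1 h2]; exact hout v hv
  have hfilter : W.filter (fun v => g v ≠ v) = insert a (insert b (W.filter fun v => f v ≠ v)) := by
    ext v
    simp only [mem_filter, mem_insert]
    constructor
    · rintro ⟨hv, hne⟩
      by_cases h1 : v = a
      · exact Or.inl h1
      by_cases h2 : v = b
      · exact Or.inr (Or.inl h2)
      · rw [hgval v h1 h2] at hne; exact Or.inr (Or.inr ⟨hv, hne⟩)
    · rintro (rfl | rfl | ⟨hv, hne⟩)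
      · exact ⟨ha, by rw [hga]; exact hab.symm⟩
      · exact ⟨hb, by rw [hgb]; exact hab⟩
      · refine ⟨hv, ?_⟩
        by_cases h1 : v = a
        · subst h1; rw [hga]; exact hab.symm
        by_cases h2 : v = b
        · subst h2; rw [hgb]; exact hab
        · rwa [hgval v h1 h2]
  have hmu := hmax g hgAnti
  rw [muF, hfilter] at hmu
  have hbnotin : b ∉ (W.filter fun v => f v ≠ v) := by
    simp only [mem_filter, not_and]; intro _; simp [hfb]
  have hanotin : a ∉ insert b (W.filter fun v => f v ≠ v) := by
    simp only [mem_insert, mem_filter]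
    push_neg
    exact ⟨hab, fun _ => by simp [hfa]⟩
  rw [card_insert_of_notMem hanotin, card_insert_of_notMem hbnotin] at hmu
  simp [muF] at hmu

lemma maxAntiM_pair_unique_exposure {W : Finset V} {f : V → V}
    (hf : AntiM G W f) (hmax : ∀ g, AntiM G W g → muF W g ≤ muF W f)
    {x ρ ρ' : V} (hx : x ∈ W) (hnfx : f x ≠ x)
    (hρ : ρ ∈ W) (hfρ : f ρ = ρ) (hρ' : ρ' ∈ W) (hfρ' : f ρ' = ρ')
    (h1 : ¬ G.Adj x ρ) (h2 : ¬ G.Adj (f x) ρ') : ρ = ρ' := by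
  by_contra hne
  obtain ⟨hW, hinv, hnadjf, hout⟩ := hf
  have hxρ : x ≠ ρ := by intro h; rw [h] at hnfx; exact hnfx hfρ
  have hxρ' : x ≠ ρ' := by intro h; rw [h] at hnfx; exact hnfx hfρ'
  set y := f x with hy
  have hyW : y ∈ W := hW x hx
  have hyx : y ≠ x := hnfx
  have hfy : f y = x := hinv x hx
  have hyρ : y ≠ ρ := by intro h; rw [h, hfρ] at hfy; exact hxρ hfy.symm
  have hyρ' : y ≠ ρ' := by intro h; rw [h, hfρ'] at hfy; exact hxρ' hfy.symm
  set g : V → V := fun v =>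
    if v = x then ρ else if v = ρ then x else if v = y then ρ' else if v = ρ' then y else f v
    with hg
  have hgx : g x = ρ := by simp [hg]
  have hgρ : g ρ = x := by simp [hg, hxρ.symm]
  have hgy : g y = ρ' := by simp [hg, hyx, hyρ]
  have hgρ' : g ρ' = y := by simp [hg, Ne.symm hxρ', Ne.symm hne, Ne.symm hyρ']
  have hgval : ∀ v, v ≠ x → v ≠ ρ → v ≠ y → v ≠ ρ' → g v = f v := by
    intro v a b c d; simp [hg, a, b, c, d]
  have hfne : ∀ v ∈ W, v ≠ x → v ≠ ρ → v ≠ y → v ≠ ρ' →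
      f v ≠ x ∧ f v ≠ ρ ∧ f v ≠ y ∧ f v ≠ ρ' := by
    intro v hv a b c d
    refine ⟨?_, ?_, ?_, ?_⟩
    · intro h; exact c (by rw [← hinv v hv, h, hy])
    · intro h; exact b (by rw [← hinv v hv, h, hfρ])
    · intro h; exact a (by rw [← hinv v hv, h, hy, hfy])
    · intro h; exact d (by rw [← hinv v hv, h, hfρ'])
  have hgAnti : AntiM G W g := by
    refine ⟨?_, ?_, ?_, ?_⟩
    · intro v hv
      by_cases a : v = x; · subst a; rw [hgx]; exact hρ
      by_cases b : v = ρ; · subst b; rw [hgρ]; exact hx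
      by_cases c : v = y; · subst c; rw [hgy]; exact hρ'
      by_cases d : v = ρ'; · subst d; rw [hgρ']; exact hyW
      rw [hgval v a b c d]; exact hW v hv
    · intro v hv
      by_cases a : v = x; · subst a; rw [hgx, hgρ]
      by_cases b : v = ρ; · subst b; rw [hgρ, hgx]
      by_cases c : v = y; · subst c; rw [hgy, hgρ']
      by_cases d : v = ρ'; · subst d; rw [hgρ', hgy]
      rw [hgval v a b c d]
      obtain ⟨e1, e2, e3, e4⟩ := hfne v hv a b c d
      rw [hgval (f v) e1 e2 e3 e4]
      exact hinv v hv
    · intro v hv hvne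
      by_cases a : v = x; · subst a; rw [hgx]; exact h1
      by_cases b : v = ρ; · subst b; rw [hgρ]; intro h; exact h1 h.symm
      by_cases c : v = y; · subst c; rw [hgy]; exact h2
      by_cases d : v = ρ'; · subst d; rw [hgρ']; intro h; exact h2 h.symm
      rw [hgval v a b c d] at hvne ⊢; exact hnadjf v hv hvne
    · intro v hv
      have a : v ≠ x := fun h => hv (h ▸ hx)
      have b : v ≠ ρ := fun h => hv (h ▸ hρ)
      have c : v ≠ y := fun h => hv (h ▸ hyW)
      have d : v ≠ ρ' := fun h => hv (h ▸ hρ')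
      rw [hgval v a b c d]; exact hout v hv
  have hfilter : W.filter (fun v => g v ≠ v)
      = insert ρ (insert ρ' (W.filter fun v => f v ≠ v)) := by
    ext v
    simp only [mem_filter, mem_insert]
    constructor
    · rintro ⟨hv, hvne⟩
      by_cases b : v = ρ; · exact Or.inl b
      by_cases d : v = ρ'; · exact Or.inr (Or.inl d)
      refine Or.inr (Or.inr ⟨hv, ?_⟩)
      by_cases a : v = x
      · subst a; exact hnfx
      by_cases c : v = y
      · subst c; rw [hfy]; exact Ne.symm hyx
      · rwa [hgval v a b c d] at hvne
    · rintro (rfl | rfl | ⟨hv, hvne⟩)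
      · exact ⟨hρ, by rw [hgρ]; exact hxρ⟩
      · exact ⟨hρ', by rw [hgρ']; exact hyρ'⟩
      · refine ⟨hv, ?_⟩
        by_cases a : v = x; · subst a; rw [hgx]; exact Ne.symm hxρ
        by_cases b : v = ρ; · subst b; rw [hgρ]; exact hxρ
        by_cases c : v = y; · subst c; rw [hgy]; exact Ne.symm hyρ'
        by_cases d : v = ρ'; · subst d; rw [hgρ']; exact hyρ'
        rwa [hgval v a b c d]
  have hmu := hmax g hgAnti
  rw [muF, hfilter] at hmu
  have hρ'notin : ρ' ∉ (W.filter fun v => f v ≠ v) := by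
    simp only [mem_filter, not_and]; intro _; simp [hfρ']
  have hρnotin : ρ ∉ insert ρ' (W.filter fun v => f v ≠ v) := by
    simp only [mem_insert, mem_filter]
    push_neg
    exact ⟨hne, fun _ => by simp [hfρ]⟩
  rw [card_insert_of_notMem hρnotin, card_insert_of_notMem hρ'notin] at hmu
  simp [muF] at hmu

lemma degOn_add_one_le {W : Finset V} {v : V} (hv : v ∈ W) : degOn G W v + 1 ≤ W.card := by
  have h1 : (G.neighborFinset v) ∩ W ⊆ W.erase v := by
    intro x hx
    simp only [mem_inter, SimpleGraph.mem_neighborFinset] at hx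
    exact mem_erase.2 ⟨hx.1.ne', hx.2⟩
  have := card_le_card h1
  have := card_erase_of_mem hv
  have : 1 ≤ W.card := card_pos.2 ⟨v, hv⟩
  unfold degOn
  omega

lemma maxDegOn_add_one_le {W : Finset V} (hW : W.Nonempty) :
    maxDegOn G W + 1 ≤ W.card := by
  unfold maxDegOn
  rcases hW with ⟨v, hv⟩
  have h : ∀ u ∈ W, degOn G W u + 1 ≤ W.card := fun u hu => degOn_add_one_le G hu
  have : W.sup (degOn G W) ≤ W.card - 1 := by
    apply Finset.sup_le
    intro u hu
    have := h u hu
    omega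
  have : 1 ≤ W.card := card_pos.2 ⟨v, hv⟩
  omega

/-- the key ω-claim for the `α ≤ 2` case. -/
lemma omega_claim {W : Finset V}
    (hα : ∀ x ∈ W, ∀ y ∈ W, ∀ z ∈ W, x ≠ y → x ≠ z → y ≠ z →
      ¬G.Adj x y → ¬G.Adj x z → ¬G.Adj y z → False)
    (hWne : W.Nonempty)
    {f : V → V} (hf : AntiM G W f) (hmax : ∀ g, AntiM G W g → muF W g ≤ muF W f) :
    ∃ q : ℕ, (W.filter fun v => f v = v).card + q ≤ omegaOn G W ∧
      W.card ≤ 2 * q + maxDegOn G W + 1 := by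
  obtain ⟨hfW, hinv, hnadjf, hout⟩ := hf
  set R := W.filter (fun v => f v = v) with hR
  set NF := W.filter (fun v => f v ≠ v) with hNF
  have hRW : R ⊆ W := filter_subset _ _
  have hNFW : NF ⊆ W := filter_subset _ _
  have hRNFdisj : Disjoint R NF := by
    rw [disjoint_left]
    intro a ha ha'
    rw [hR, mem_filter] at ha
    rw [hNF, mem_filter] at ha'
    exact ha'.2 ha.2
  have hsplit : ∀ v ∈ W, v ∉ R → v ∈ NF := by
    intro v hv hvr
    rw [hNF, mem_filter]
    rw [hR, mem_filter] at hvr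
    exact ⟨hv, fun h => hvr ⟨hv, h⟩⟩
  have hRclique : G.IsClique (R : Set V) := by
    intro a ha b hb hab
    simp only [hR, coe_filter, Set.mem_setOf_eq] at ha hb
    exact maxAntiM_fixed_clique G ⟨hfW, hinv, hnadjf, hout⟩ hmax ha.1 hb.1 ha.2 hb.2 hab
  -- non-neighbourhoods
  set NN : V → Finset V := fun v => (W.erase v) \ G.neighborFinset v with hNNdef
  have hNNmem : ∀ v x, x ∈ NN v ↔ (x ∈ W ∧ x ≠ v ∧ ¬ G.Adj v x) := by
    intro v x
    simp only [hNNdef, mem_sdiff, mem_erase, SimpleGraph.mem_neighborFinset]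
    tauto
  have hNNcard : ∀ v ∈ W, (NN v).card + degOn G W v + 1 = W.card := by
    intro v hv
    have hpart : (W.erase v) \ G.neighborFinset v ∪ (W.erase v) ∩ G.neighborFinset v
        = W.erase v := sdiff_union_inter _ _
    have hdisj : Disjoint ((W.erase v) \ G.neighborFinset v)
        ((W.erase v) ∩ G.neighborFinset v) := disjoint_sdiff_inter _ _
    have hcards := card_union_of_disjoint hdisj
    rw [hpart] at hcards
    have hinter : (W.erase v) ∩ G.neighborFinset v = G.neighborFinset v ∩ W := by
      ext x
      simp only [mem_inter, mem_erase, SimpleGraph.mem_neighborFinset]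
      constructor
      · rintro ⟨⟨_, hxW⟩, hadj⟩; exact ⟨hadj, hxW⟩
      · rintro ⟨hadj, hxW⟩; exact ⟨⟨hadj.ne', hxW⟩, hadj⟩
    rw [hinter] at hcards
    have herase := card_erase_of_mem hv
    have h1W : 1 ≤ W.card := card_pos.2 ⟨v, hv⟩
    have hNNeq : (NN v).card = ((W.erase v) \ G.neighborFinset v).card := rfl
    unfold degOn
    omega
  have hNNclique : ∀ v ∈ W, G.IsClique ((NN v : Finset V) : Set V) := by
    intro v hv x hx y hy hxy
    simp only [mem_coe] at hx hy
    rw [hNNmem] at hx hy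
    by_contra hnadj
    exact hα v hv x hx.1 y hy.1 (Ne.symm hx.2.1) (Ne.symm hy.2.1) hxy
      hx.2.2 hy.2.2 hnadj
  -- P and Q
  set P := NF.filter (fun x => ∀ ρ ∈ R, G.Adj x ρ) with hP
  set Q := NF \ P with hQ
  have hPNF : P ⊆ NF := filter_subset _ _
  have hQNF : Q ⊆ NF := sdiff_subset
  have hPQdisj : Disjoint P Q := disjoint_sdiff
  have hPQunion : P ∪ Q = NF := union_sdiff_of_subset hPNF
  have hQmem : ∀ x ∈ Q, ∃ ρ ∈ R, ¬ G.Adj x ρ := by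
    intro x hx
    rw [hQ, mem_sdiff] at hx
    obtain ⟨hxNF, hxP⟩ := hx
    by_contra h
    push_neg at h
    exact hxP (by rw [hP, mem_filter]; exact ⟨hxNF, fun ρ hρ => h ρ hρ⟩)
  have hQtoP : ∀ x ∈ Q, f x ∈ P := by
    intro x hx
    have hxNF := hQNF hx
    have hxW := hNFW hxNF
    have hxne : f x ≠ x := (mem_filter.1 hxNF).2
    have hfxNF : f x ∈ NF := by
      rw [hNF, mem_filter]
      refine ⟨hfW x hxW, ?_⟩
      rw [hinv x hxW]
      exact fun h => hxne h.symm
    by_contra hfxP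
    have hfxQ : f x ∈ Q := by
      rw [hQ, mem_sdiff]; exact ⟨hfxNF, hfxP⟩
    obtain ⟨ρ, hρR, hρnadj⟩ := hQmem x hx
    obtain ⟨ρ', hρ'R, hρ'nadj⟩ := hQmem (f x) hfxQ
    have hρW := hRW hρR
    have hρ'W := hRW hρ'R
    have hρfix : f ρ = ρ := (mem_filter.1 hρR).2
    have hρ'fix : f ρ' = ρ' := (mem_filter.1 hρ'R).2
    have heq : ρ = ρ' := maxAntiM_pair_unique_exposure G ⟨hfW, hinv, hnadjf, hout⟩ hmax
      hxW hxne hρW hρfix hρ'W hρ'fix hρnadj hρ'nadj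
    subst heq
    -- {x, f x, ρ} is an independent triple
    have hxρ : x ≠ ρ := by intro h; rw [h] at hxne; exact hxne hρfix
    have hfxρ : f x ≠ ρ := by
      intro h
      have := hinv x hxW
      rw [h, hρfix] at this
      exact hxρ this.symm
    exact hα x hxW (f x) (hfW x hxW) ρ hρW (fun h => hxne h.symm) hxρ hfxρ
      (hnadjf x hxW hxne) hρnadj hρ'nadj
  have hQP : Q.card ≤ P.card := by
    apply Finset.card_le_card_of_injOn f hQtoP
    intro a ha b hb hab
    have haW := hNFW (hQNF ha)
    have hbW := hNFW (hQNF hb)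
    have := hinv a haW
    rw [hab, hinv b hbW] at this
    exact this.symm
  -- main case split
  by_cases hcase : ∃ z ∈ NF, W.card ≤ 2 * ((NN z) ∩ P).card + maxDegOn G W + 1
  · obtain ⟨z, hzNF, hzbound⟩ := hcase
    refine ⟨((NN z) ∩ P).card, ?_, hzbound⟩
    have hdisjRNP : Disjoint R ((NN z) ∩ P) :=
      hRNFdisj.mono_right ((inter_subset_right).trans hPNF)
    have hclique : G.IsClique ((R ∪ ((NN z) ∩ P) : Finset V) : Set V) := by
      intro a ha b hb hab
      simp only [coe_union, Set.mem_union, mem_coe] at ha hb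
      rcases ha with ha | ha <;> rcases hb with hb | hb
      · exact hRclique ha hb hab
      · have hbP := (mem_inter.1 hb).2
        have := (mem_filter.1 hbP).2 a ha
        exact this.symm
      · have haP := (mem_inter.1 ha).2
        exact (mem_filter.1 haP).2 b hb
      · exact hNNclique z (hNFW hzNF) (mem_coe.2 (mem_inter.1 ha).1)
          (mem_coe.2 (mem_inter.1 hb).1) hab
    have hsubW : R ∪ ((NN z) ∩ P) ⊆ W := by
      apply union_subset hRW
      exact (inter_subset_right).trans (hPNF.trans hNFW)
    have := le_omegaOn G hsubW hclique
    rwa [card_union_of_disjoint hdisjRNP] at this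
  · push_neg at hcase
    -- NF must be empty or we get a contradiction; first handle NF = ∅
    rcases NF.eq_empty_or_nonempty with hNFe | hNFne
    · -- W = R is a clique
      refine ⟨0, ?_, ?_⟩
      · have hWR : W = R := by
          ext v
          constructor
          · intro hv
            by_contra hvR
            have := hsplit v hv hvR
            rw [hNFe] at this
            exact notMem_empty _ this
          · intro hv; exact hRW hv
        have h1 := le_omegaOn G (le_refl W).subset (hWR ▸ hRclique)
        have h2 : R.card ≤ W.card := card_le_card hRW
        have h3 : W = R := hWR
        rw [← h3]
        omega
      · obtain ⟨v, hv⟩ := hWne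
        -- W is a clique so deg v = W.card - 1
        have hdeg : W.erase v ⊆ (G.neighborFinset v) ∩ W := by
          intro x hx
          obtain ⟨hxv, hxW⟩ := mem_erase.1 hx
          have : G.Adj v x := by
            by_contra hnadj
            have hvR : v ∈ R := by
              by_contra h; have := hsplit v hv h; rw [hNFe] at this
              exact notMem_empty _ this
            have hxR : x ∈ R := by
              by_contra h; have := hsplit x hxW h; rw [hNFe] at this
              exact notMem_empty _ this
            exact hnadj (hRclique hvR hxR (Ne.symm hxv))
          simp only [mem_inter, SimpleGraph.mem_neighborFinset]
          exact ⟨this, hxW⟩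
        have h1 := card_le_card hdeg
        have h2 := card_erase_of_mem hv
        have h3 := degOn_le_maxDegOn G hv
        have : 1 ≤ W.card := card_pos.2 ⟨v, hv⟩
        unfold degOn at h3
        omega
    · -- NF nonempty: contradiction with the double count
      exfalso
      have hPne : P.Nonempty := by
        rcases P.eq_empty_or_nonempty with hPe | h
        · exfalso
          have hQNF2 : Q = NF := by rw [hQ, hPe, sdiff_empty]
          rw [hQNF2, hPe] at hQP
          have hle : NF.card ≤ 0 := by simpa using hQP
          have := card_pos.2 hNFne
          omega
        · exact h
      -- pointwise bounds
      have hNNsubNF : ∀ p ∈ P, NN p ⊆ NF := by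
        intro p hp x hx
        rw [hNNmem] at hx
        obtain ⟨hxW, hxp, hnadj⟩ := hx
        by_contra hxNF
        have hxR : x ∈ R := by
          by_contra h
          exact hxNF (hsplit x hxW h)
        have := (mem_filter.1 hp).2 x hxR
        exact hnadj this
      have hsplitNN : ∀ p ∈ P, ((NN p) ∩ P).card + ((NN p) ∩ Q).card = (NN p).card := by
        intro p hp
        rw [← card_union_of_disjoint (hPQdisj.mono inter_subset_right inter_subset_right),
          ← inter_union_distrib_left, hPQunion]
        congr 1
        exact inter_eq_left.2 (hNNsubNF p hp)
      have hpointP : ∀ p ∈ P, W.card ≤ 2 * ((NN p) ∩ Q).card + maxDegOn G W := by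
        intro p hp
        have hpW := hNFW (hPNF hp)
        have h1 := hNNcard p hpW
        have h2 := hsplitNN p hp
        have h3 := hcase p (hPNF hp)
        have h4 := degOn_le_maxDegOn G hpW
        omega
      have hpointQ : ∀ x ∈ Q, 2 * ((NN x) ∩ P).card + maxDegOn G W + 1 < W.card :=
        fun x hx => hcase x (hQNF hx)
      -- double counting
      have hsym : ∀ p ∈ P, ∀ q ∈ Q, (q ∈ NN p ↔ p ∈ NN q) := by
        intro p hp q hq
        have hpW := hNFW (hPNF hp)
        have hqW := hNFW (hQNF hq)
        rw [hNNmem, hNNmem]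
        constructor
        · rintro ⟨_, hne, hnadj⟩
          exact ⟨hpW, Ne.symm hne, fun h => hnadj h.symm⟩
        · rintro ⟨_, hne, hnadj⟩
          exact ⟨hqW, Ne.symm hne, fun h => hnadj h.symm⟩
      have hdouble : (∑ p ∈ P, ((NN p) ∩ Q).card) = ∑ x ∈ Q, ((NN x) ∩ P).card := by
        have h1 : ∀ p ∈ P, ((NN p) ∩ Q).card = ∑ x ∈ Q, if x ∈ NN p then 1 else 0 := by
          intro p hp
          rw [inter_comm, ← filter_mem_eq_inter, card_filter]
        have h2 : ∀ x ∈ Q, ((NN x) ∩ P).card = ∑ p ∈ P, if p ∈ NN x then 1 else 0 := by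
          intro x hx
          rw [inter_comm, ← filter_mem_eq_inter, card_filter]
        rw [Finset.sum_congr rfl h1, Finset.sum_congr rfl h2, Finset.sum_comm]
        apply Finset.sum_congr rfl
        intro x hx
        apply Finset.sum_congr rfl
        intro p hp
        by_cases h : x ∈ NN p
        · rw [if_pos h, if_pos ((hsym p hp x hx).1 h)]
        · rw [if_neg h, if_neg (fun h' => h ((hsym p hp x hx).2 h'))]
      -- sums
      set E := ∑ p ∈ P, ((NN p) ∩ Q).card with hE
      have hsumP : P.card * W.card ≤ 2 * E + P.card * maxDegOn G W := by
        calc P.card * W.card = ∑ _p ∈ P, W.card := by rw [Finset.sum_const, smul_eq_mul]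
        _ ≤ ∑ p ∈ P, (2 * ((NN p) ∩ Q).card + maxDegOn G W) :=
            Finset.sum_le_sum hpointP
        _ = 2 * E + P.card * maxDegOn G W := by
            rw [Finset.sum_add_distrib, Finset.sum_const, smul_eq_mul, ← Finset.mul_sum, hE]
      have hEQ : E = ∑ x ∈ Q, ((NN x) ∩ P).card := hdouble
      have hdist : ∑ x ∈ Q, (2 * ((NN x) ∩ P).card + maxDegOn G W + 2)
          = 2 * (∑ x ∈ Q, ((NN x) ∩ P).card) + Q.card * maxDegOn G W + 2 * Q.card := by
        rw [Finset.sum_add_distrib, Finset.sum_add_distrib, Finset.sum_const,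
          Finset.sum_const, smul_eq_mul, smul_eq_mul, Finset.mul_sum]
        ring
      have hsumQ : 2 * E + Q.card * maxDegOn G W + 2 * Q.card ≤ Q.card * W.card := by
        calc 2 * E + Q.card * maxDegOn G W + 2 * Q.card
            = ∑ x ∈ Q, (2 * ((NN x) ∩ P).card + maxDegOn G W + 2) := by rw [hEQ, hdist]
        _ ≤ ∑ _x ∈ Q, W.card := by
              apply Finset.sum_le_sum
              intro x hx
              have := hpointQ x hx
              omega
        _ = Q.card * W.card := by rw [Finset.sum_const, smul_eq_mul]
      have hDn := maxDegOn_add_one_le G hWne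
      have hP1 : 1 ≤ P.card := card_pos.2 hPne
      -- integer contradiction
      have : False := by
        have h1 : (P.card : ℤ) * W.card ≤ 2 * E + P.card * maxDegOn G W := by
          exact_mod_cast hsumP
        have h2 : 2 * (E : ℤ) + Q.card * maxDegOn G W + 2 * Q.card ≤ Q.card * W.card := by
          exact_mod_cast hsumQ
        have h3 : (Q.card : ℤ) ≤ P.card := by exact_mod_cast hQP
        have h4 : (maxDegOn G W : ℤ) + 1 ≤ W.card := by exact_mod_cast hDn
        have h5 : (1 : ℤ) ≤ P.card := by exact_mod_cast hP1
        have h6 : (0 : ℤ) ≤ Q.card := by positivity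
        nlinarith [mul_nonneg (sub_nonneg.2 h3) (sub_nonneg.2 (by linarith : (maxDegOn G W : ℤ) ≤ W.card))]
      exact this

/-- C2: the case `α(W) ≤ 2`. -/
lemma four_chi_le_of_alpha_le_two {W : Finset V}
    (hα : ∀ x ∈ W, ∀ y ∈ W, ∀ z ∈ W, x ≠ y → x ≠ z → y ≠ z →
      ¬G.Adj x y → ¬G.Adj x z → ¬G.Adj y z → False) :
    4 * chiOn G W ≤ 2 * omegaOn G W + maxDegOn G W + W.card + 1 := by
  rcases W.eq_empty_or_nonempty with rfl | hWne
  · simp [chiOn_empty]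
  obtain ⟨f, hf, hmax⟩ := exists_max_antiM G W
  obtain ⟨hfW, hinv, hnadjf, hout⟩ := hf
  set cls : V → Finset V := fun v => {v, f v} with hcls
  have hclsmem : ∀ v, v ∈ cls v := fun v => mem_insert_self _ _
  have hproper : ∀ v ∈ W, ∀ w ∈ W, G.Adj v w → cls v ≠ cls w := by
    intro v hv w hw hadj heq
    have hwin : w ∈ cls v := heq ▸ hclsmem w
    simp only [hcls, mem_insert, mem_singleton] at hwin
    rcases hwin with rfl | hwfv
    · exact hadj.ne rfl
    · subst hwfv
      have hne : f v ≠ v := hadj.ne'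
      exact hnadjf v hv hne hadj
  have hchi : chiOn G W ≤ (W.image cls).card := chiOn_le_card_image G cls hproper
  set C := W.image cls with hC
  have hclseq : ∀ v ∈ W, ∀ x, x ∈ cls v → cls x = cls v := by
    intro v hv x hx
    simp only [hcls, mem_insert, mem_singleton] at hx
    rcases hx with rfl | rfl
    · rfl
    · show ({f v, f (f v)} : Finset V) = {v, f v}
      rw [hinv v hv, pair_comm]
  have hdisjC : ∀ c₁ ∈ C, ∀ c₂ ∈ C, c₁ ≠ c₂ → Disjoint (id c₁) (id c₂) := by
    intro c₁ hc₁ c₂ hc₂ hne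
    obtain ⟨v, hv, rfl⟩ := mem_image.1 hc₁
    obtain ⟨w, hw, rfl⟩ := mem_image.1 hc₂
    rw [disjoint_left]
    intro x hx1 hx2
    exact hne ((hclseq v hv x hx1).symm.trans (hclseq w hw x hx2))
  have hcover : C.biUnion id = W := by
    ext x
    simp only [mem_biUnion, id]
    constructor
    · rintro ⟨c, hc, hxc⟩
      obtain ⟨v, hv, rfl⟩ := mem_image.1 hc
      simp only [hcls, mem_insert, mem_singleton] at hxc
      rcases hxc with rfl | rfl
      · exact hv
      · exact hfW v hv
    · intro hx
      exact ⟨cls x, mem_image_of_mem _ hx, hclsmem x⟩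
  have hsum : ∑ c ∈ C, c.card = W.card := by
    rw [← hcover, card_biUnion hdisjC]
    simp [id]
  set R := W.filter (fun v => f v = v) with hR
  have hsingle : (C.filter fun c => c.card ≤ 1) ⊆ R.image (fun v => {v}) := by
    intro c hc
    obtain ⟨hcC, hc1⟩ := mem_filter.1 hc
    obtain ⟨v, hv, rfl⟩ := mem_image.1 hcC
    have hfv : f v = v := by
      by_contra hne
      have : (cls v).card = 2 := by
        simp only [hcls]
        rw [card_insert_of_notMem (by simp [Ne.symm hne]), card_singleton]
      omega
    refine mem_image.2 ⟨v, mem_filter.2 ⟨hv, hfv⟩, ?_⟩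
    simp [hcls, hfv]
  have hcount : 2 * C.card ≤ W.card + R.card := by
    have h1 : ∀ c ∈ C, 2 ≤ c.card + (if c.card ≤ 1 then 1 else 0) := by
      intro c hc
      obtain ⟨v, hv, rfl⟩ := mem_image.1 hc
      have : 1 ≤ (cls v).card := card_pos.2 ⟨v, hclsmem v⟩
      split_ifs with h
      · omega
      · omega
    have h2 : 2 * C.card = ∑ c ∈ C, 2 := by rw [Finset.sum_const, smul_eq_mul]; ring
    have h3 : (∑ c ∈ C, 2) ≤ ∑ c ∈ C, (c.card + (if c.card ≤ 1 then 1 else 0)) :=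
      Finset.sum_le_sum h1
    have h4 : ∑ c ∈ C, (c.card + (if c.card ≤ 1 then 1 else 0))
        = W.card + (C.filter fun c => c.card ≤ 1).card := by
      rw [Finset.sum_add_distrib, hsum, ← card_filter]
    have h5 : (C.filter fun c => c.card ≤ 1).card ≤ R.card :=
      (card_le_card hsingle).trans card_image_le
    omega
  obtain ⟨q, hq1, hq2⟩ := omega_claim G hα hWne ⟨hfW, hinv, hnadjf, hout⟩ hmax
  rw [← hR] at hq1
  omega

/-- independence of a finset (in `G`) -/
def IndepOn (W : Finset V) : Prop := ∀ a ∈ W, ∀ b ∈ W, a ≠ b → ¬ G.Adj a b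

instance (W : Finset V) : Decidable (IndepOn G W) := by unfold IndepOn; infer_instance

lemma exists_maximal_indep {W I₀ : Finset V} (hI₀W : I₀ ⊆ W) (hI₀ : IndepOn G I₀) :
    ∃ I, I₀ ⊆ I ∧ I ⊆ W ∧ IndepOn G I ∧ ∀ v ∈ W, v ∉ I → ∃ u ∈ I, G.Adj v u := by
  obtain ⟨I, hIF, hImax⟩ := Finset.exists_max_image
    (W.powerset.filter fun J => IndepOn G J ∧ I₀ ⊆ J) Finset.card
    ⟨I₀, mem_filter.2 ⟨mem_powerset.2 hI₀W, hI₀, le_refl I₀⟩⟩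
  rw [mem_filter, mem_powerset] at hIF
  obtain ⟨hIW, hIind, hI₀I⟩ := hIF
  refine ⟨I, hI₀I, hIW, hIind, ?_⟩
  intro v hvW hvI
  by_contra h
  push_neg at h
  have hins : insert v I ∈ (W.powerset.filter fun J => IndepOn G J ∧ I₀ ⊆ J) := by
    rw [mem_filter, mem_powerset]
    refine ⟨insert_subset hvW hIW, ?_, hI₀I.trans (subset_insert _ _)⟩
    intro a ha b hb hab
    rcases mem_insert.1 ha with ha' | ha' <;> rcases mem_insert.1 hb with hb' | hb'
    · exact absurd (ha'.trans hb'.symm) hab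
    · rw [ha']; exact h b hb'
    · rw [hb']; intro hadj; exact h a ha' hadj.symm
    · exact hIind a ha' b hb' hab
  have := hImax _ hins
  rw [card_insert_of_notMem hvI] at this
  omega

lemma exists_maxDegOn_mem {W : Finset V} (hW : W.Nonempty) :
    ∃ v ∈ W, degOn G W v = maxDegOn G W := by
  obtain ⟨v, hv, hveq⟩ := Finset.exists_mem_eq_sup W hW (degOn G W)
  exact ⟨v, hv, hveq.symm⟩

/-- Lemma C : `4χ ≤ 2ω + Δ + n + 1` for all graphs. -/
lemma lemC (W : Finset V) :
    4 * chiOn G W ≤ 2 * omegaOn G W + maxDegOn G W + W.card + 1 := by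
  induction W using Finset.strongInduction with
  | _ W ih =>
  by_cases hex : ∃ x ∈ W, ∃ y ∈ W, ∃ z ∈ W, x ≠ y ∧ x ≠ z ∧ y ≠ z ∧
      ¬ G.Adj x y ∧ ¬ G.Adj x z ∧ ¬ G.Adj y z
  · obtain ⟨x, hx, y, hy, z, hz, hxy, hxz, hyz, nxy, nxz, nyz⟩ := hex
    have hI₀ind : IndepOn G {x, y, z} := by
      intro a ha b hb hab
      simp only [mem_insert, mem_singleton] at ha hb
      rcases ha with rfl | rfl | rfl <;> rcases hb with rfl | rfl | rfl <;>
        first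
          | exact absurd rfl hab
          | assumption
          | (intro hadj; first
              | exact nxy hadj.symm
              | exact nxz hadj.symm
              | exact nyz hadj.symm)
    have hI₀W : ({x, y, z} : Finset V) ⊆ W := by
      intro a ha
      simp only [mem_insert, mem_singleton] at ha
      rcases ha with rfl | rfl | rfl <;> assumption
    obtain ⟨I, hI₀I, hIW, hIind, hImax⟩ := exists_maximal_indep G hI₀W hI₀ind
    have hI3 : 3 ≤ I.card := by
      have : ({x, y, z} : Finset V).card = 3 := by
        rw [card_insert_of_notMem (by simp [hxy, hxz]),
          card_insert_of_notMem (by simp [hyz]), card_singleton]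
      calc 3 = ({x, y, z} : Finset V).card := this.symm
      _ ≤ I.card := card_le_card hI₀I
    have hIne : I.Nonempty := card_pos.1 (by omega)
    set W' := W \ I with hW'
    have hW'ss : W' ⊂ W := by
      obtain ⟨a, ha⟩ := hIne
      exact sdiff_ssubset (hIW) ⟨a, ha⟩
    have hunion : I ∪ W' = W := union_sdiff_of_subset hIW
    have hchi : chiOn G W ≤ 1 + chiOn G W' := by
      calc chiOn G W = chiOn G (I ∪ W') := by rw [hunion]
      _ ≤ chiOn G I + chiOn G W' := chiOn_union_le G I W'
      _ ≤ 1 + chiOn G W' := by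
          have := chiOn_indep G (fun v hv w hw hadj => hIind v hv w hw hadj.ne hadj)
          omega
    have hω : omegaOn G W' ≤ omegaOn G W := omegaOn_mono G sdiff_subset
    have hcard : W'.card + I.card = W.card := by
      rw [hW']
      exact card_sdiff_add_card_eq_card hIW
    have hIH := ih W' hW'ss
    by_cases h4 : 4 ≤ I.card
    · have hΔ : maxDegOn G W' ≤ maxDegOn G W := maxDegOn_mono G sdiff_subset
      omega
    · have hI3' : I.card = 3 := by omega
      rcases W'.eq_empty_or_nonempty with hW'e | hW'ne
      · rw [hW'e] at hchi hcard
        rw [chiOn_empty] at hchi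
        simp only [card_empty] at hcard
        omega
      · obtain ⟨w', hw'W', hw'deg⟩ := exists_maxDegOn_mem G hW'ne
        have hw'W : w' ∈ W := sdiff_subset hw'W'
        have hw'nI : w' ∉ I := (mem_sdiff.1 hw'W').2
        obtain ⟨u, huI, hadj⟩ := hImax w' hw'W hw'nI
        have hukey : insert u ((G.neighborFinset w') ∩ W') ⊆ (G.neighborFinset w') ∩ W := by
          intro t ht
          rcases mem_insert.1 ht with ht' | ht'
          · rw [ht']
            exact mem_inter.2 ⟨(G.mem_neighborFinset _ _).2 hadj, hIW huI⟩
          · exact (inter_subset_inter (le_refl _) sdiff_subset) ht'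
        have hunotin : u ∉ (G.neighborFinset w') ∩ W' :=
          fun h => (mem_sdiff.1 (mem_inter.1 h).2).2 huI
        have hdegW : degOn G W' w' + 1 ≤ degOn G W w' := by
          have hc := card_le_card hukey
          rw [card_insert_of_notMem hunotin] at hc
          unfold degOn
          exact hc
        have hΔ : maxDegOn G W' + 1 ≤ maxDegOn G W := by
          have := degOn_le_maxDegOn G hw'W
          omega
        omega
  · push_neg at hex
    apply four_chi_le_of_alpha_le_two
    intro a ha b hb c hc hab hac hbc nab nac nbc
    exact nbc (hex a ha b hb c hc hab hac hbc nab nac)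

/-- Lemma L : `4χ(W) + |S| ≤ 2ω(W) + Δ(W) + |W| + 1 + 3χ(S)` for `S ⊆ W`. -/
lemma lemL (W S : Finset V) (hS : S ⊆ W) :
    4 * chiOn G W + S.card ≤ 2 * omegaOn G W + maxDegOn G W + W.card + 1 + 3 * chiOn G S := by
  suffices H : ∀ n (W S : Finset V), S ⊆ W → (W \ S).card = n →
      4 * chiOn G W + S.card ≤ 2 * omegaOn G W + maxDegOn G W + W.card + 1 + 3 * chiOn G S by
    exact H _ W S hS rfl
  intro n
  induction n using Nat.strong_induction_on with
  | _ n ih =>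
  intro W S hSW hcard
  rcases Nat.eq_zero_or_pos n with rfl | hn
  · have hWS : W = S := by
      have h1 : W ⊆ S := by
        rw [← sdiff_eq_empty_iff_subset]
        exact card_eq_zero.1 hcard
      exact subset_antisymm h1 hSW
    subst hWS
    have h1 := chiOn_le_maxDegOn_succ G W
    omega
  · by_cases hcrit : ∃ v ∈ W \ S, ((G.neighborFinset v) ∩ S).card < chiOn G S
    · obtain ⟨v, hv, hvdeg⟩ := hcrit
      obtain ⟨hvW, hvS⟩ := mem_sdiff.1 hv
      set S' := insert v S with hS'
      have hS'W : S' ⊆ W := insert_subset hvW hSW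
      have hchiS' : chiOn G S' ≤ chiOn G S :=
        chiOn_le_of_colorable G (colorable_insert_of_degree_lt G hvdeg (chiOn_colorable G S))
      have hcard' : (W \ S').card = n - 1 := by
        rw [hS', sdiff_insert]
        rw [card_erase_of_mem hv, hcard]
      have hrec := ih (n - 1) (by omega) W S' hS'W hcard'
      have hcardS' : S'.card = S.card + 1 := card_insert_of_notMem hvS
      omega
    · push_neg at hcrit
      set T := W \ S with hT
      have hTne : T.Nonempty := by
        rw [← card_pos, hcard]; exact hn
      have hST : Disjoint S T := disjoint_sdiff
      have hunion : S ∪ T = W := union_sdiff_of_subset hSW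
      have hchi : chiOn G W ≤ chiOn G S + chiOn G T := by
        rw [← hunion]; exact chiOn_union_le G S T
      have hC := lemC G T
      have hω : omegaOn G T ≤ omegaOn G W := omegaOn_mono G sdiff_subset
      obtain ⟨w', hw'T, hw'deg⟩ := exists_maxDegOn_mem G hTne
      have hw'W : w' ∈ W := sdiff_subset hw'T
      have hkey : ((G.neighborFinset w') ∩ S) ∪ ((G.neighborFinset w') ∩ T)
          ⊆ (G.neighborFinset w') ∩ W := by
        rw [← inter_union_distrib_left, hunion]
      have hdisj2 : Disjoint ((G.neighborFinset w') ∩ S) ((G.neighborFinset w') ∩ T) :=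
        hST.mono inter_subset_right inter_subset_right
      have hdegsum : chiOn G S + maxDegOn G T ≤ maxDegOn G W := by
        have h1 := card_le_card hkey
        rw [card_union_of_disjoint hdisj2] at h1
        have h2 := hcrit w' hw'T
        have h3 := degOn_le_maxDegOn G hw'W
        unfold degOn at h3 hw'deg
        omega
      have hcards : S.card + T.card = W.card := by
        rw [← hunion, card_union_of_disjoint hST]
      omega

lemma toNat_chrom_le_chiOn_univ :
    G.chromaticNumber.toNat ≤ chiOn G (Finset.univ : Finset V) := by
  obtain ⟨c⟩ := chiOn_colorable G (Finset.univ : Finset V)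
  have hcol : G.Colorable (chiOn G (Finset.univ : Finset V)) := by
    refine ⟨SimpleGraph.Coloring.mk (fun v => c ⟨v, by simp⟩) ?_⟩
    intro v w hadj
    exact c.valid (show (G.induce ((Finset.univ : Finset V) : Set V)).Adj
      ⟨v, by simp⟩ ⟨w, by simp⟩ from hadj)
  have h := hcol.chromaticNumber_le
  have hne : G.chromaticNumber ≠ ⊤ :=
    (lt_of_le_of_lt h (by exact_mod_cast WithTop.coe_lt_top _)).ne
  exact_mod_cast ENat.toNat_le_of_le_coe h

end CB

open Finset CB in
/-- the main nat-valued inequality -/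
lemma main_nat_ineq {V : Type*} [Fintype V] [DecidableEq V]
    (G : SimpleGraph V) [DecidableRel G.Adj]
    (K : Finset V) (hK : ¬ (Gᶜ.induce ((K : Set V)ᶜ)).Preconnected)
    (s : Finset V) :
    4 * G.chromaticNumber.toNat + (s \ K).card ≤
      2 * G.cliqueNum + 2 * G.maxDegree + 2 + 4 * chiOn G K + 3 * chiOn G (s \ K) := by
  classical
  have hK' : ∃ a b : ↥((K : Set V)ᶜ), ¬ (Gᶜ.induce ((K : Set V)ᶜ)).Reachable a b := by
    by_contra h
    push_neg at h
    exact hK (fun u v => h u v)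
  obtain ⟨a, b, hab⟩ := hK'
  set Kc : Finset V := univ \ K with hKc
  have hmemKc : ∀ v : V, v ∈ Kc ↔ v ∉ K := by
    intro v; rw [hKc, mem_sdiff]; simp
  have hmemC : ∀ v : V, v ∈ ((K : Set V)ᶜ) ↔ v ∉ K := by
    intro v; rw [Set.mem_compl_iff]; simp
  set A := Kc.filter
    (fun v => ∃ h : v ∈ ((K : Set V)ᶜ), (Gᶜ.induce ((K : Set V)ᶜ)).Reachable a ⟨v, h⟩) with hA
  set B := Kc \ A with hB
  have hAKc : A ⊆ Kc := filter_subset _ _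
  have hBKc : B ⊆ Kc := sdiff_subset
  have hABdisj : Disjoint A B := disjoint_sdiff
  have hABunion : A ∪ B = Kc := union_sdiff_of_subset hAKc
  have haA : a.1 ∈ A := by
    rw [hA, mem_filter]
    refine ⟨(hmemKc a.1).2 ((hmemC a.1).1 a.2), a.2, ?_⟩
    exact SimpleGraph.Reachable.refl _
  have hbB : b.1 ∈ B := by
    rw [hB, mem_sdiff]
    refine ⟨(hmemKc b.1).2 ((hmemC b.1).1 b.2), ?_⟩
    intro hbA
    rw [hA, mem_filter] at hbA
    obtain ⟨-, h, hreach⟩ := hbA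
    exact hab hreach
  have hAne : A.Nonempty := ⟨a.1, haA⟩
  have hBne : B.Nonempty := ⟨b.1, hbB⟩
  have hcross : ∀ x ∈ A, ∀ y ∈ B, G.Adj x y := by
    intro x hx y hy
    rw [hA, mem_filter] at hx
    obtain ⟨hxKc, hxc, hxreach⟩ := hx
    rw [hB, mem_sdiff] at hy
    obtain ⟨hyKc, hynA⟩ := hy
    have hyc : y ∈ ((K : Set V)ᶜ) := (hmemC y).2 ((hmemKc y).1 hyKc)
    by_contra hnadj
    have hxy : x ≠ y := by
      rintro rfl
      exact hynA (by rw [hA, mem_filter]; exact ⟨hxKc, hxc, hxreach⟩)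
    have hcadj : Gᶜ.Adj x y := by rw [SimpleGraph.compl_adj]; exact ⟨hxy, hnadj⟩
    apply hynA
    rw [hA, mem_filter]
    refine ⟨hyKc, hyc, ?_⟩
    exact hxreach.trans (SimpleGraph.Adj.reachable
      (show (Gᶜ.induce ((K : Set V)ᶜ)).Adj ⟨x, hxc⟩ ⟨y, hyc⟩ from hcadj))
  -- partition coloring
  have hchiuniv : chiOn G univ ≤ chiOn G K + (chiOn G A + chiOn G B) := by
    have h1 : (univ : Finset V) = K ∪ Kc := (union_sdiff_of_subset (subset_univ K)).symm
    calc chiOn G univ = chiOn G (K ∪ Kc) := by rw [← h1]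
    _ ≤ chiOn G K + chiOn G Kc := chiOn_union_le G K Kc
    _ ≤ chiOn G K + (chiOn G A + chiOn G B) := by
        have : chiOn G Kc ≤ chiOn G A + chiOn G B := by
          rw [← hABunion]; exact chiOn_union_le G A B
        omega
  -- pieces for L
  set SA := (s \ K) ∩ A with hSA
  set SB := (s \ K) ∩ B with hSB
  have hsKc : s \ K ⊆ Kc := sdiff_subset_sdiff (subset_univ s) (le_refl K)
  have hSsplit : SA ∪ SB = s \ K := by
    rw [hSA, hSB, ← inter_union_distrib_left, hABunion]
    exact inter_eq_left.2 hsKc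
  have hSdisj : Disjoint SA SB := hABdisj.mono inter_subset_right inter_subset_right
  have hScards : SA.card + SB.card = (s \ K).card := by
    rw [← hSsplit, card_union_of_disjoint hSdisj]
  have hLA := lemL G A SA inter_subset_right
  have hLB := lemL G B SB inter_subset_right
  -- join split for chi of S
  have hjoin : chiOn G SA + chiOn G SB ≤ chiOn G (s \ K) := by
    rw [← hSsplit]
    exact chiOn_add_chiOn_le_of_cross G
      (fun x hx y hy => hcross x (inter_subset_right hx) y (inter_subset_right hy))
  -- omega assembly
  have homega : omegaOn G A + omegaOn G B ≤ G.cliqueNum := by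
    obtain ⟨tA, htAsub, htAcl, htAcard⟩ := exists_omegaOn G A
    obtain ⟨tB, htBsub, htBcl, htBcard⟩ := exists_omegaOn G B
    have hcl : G.IsClique ((tA ∪ tB : Finset V) : Set V) := by
      intro x hx y hy hxy
      simp only [coe_union, Set.mem_union, mem_coe] at hx hy
      rcases hx with hx | hx <;> rcases hy with hy | hy
      · exact htAcl hx hy hxy
      · exact hcross x (htAsub hx) y (htBsub hy)
      · exact (hcross y (htAsub hy) x (htBsub hx)).symm
      · exact htBcl hx hy hxy
    have hdisj : Disjoint tA tB := hABdisj.mono htAsub htBsub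
    have := SimpleGraph.IsClique.card_le_cliqueNum (tc := hcl)
    rw [card_union_of_disjoint hdisj] at this
    omega
  -- degree assembly
  have hdegA : maxDegOn G A + B.card ≤ G.maxDegree := by
    obtain ⟨w, hwA, hwdeg⟩ := exists_maxDegOn_mem G hAne
    have hsub : ((G.neighborFinset w) ∩ A) ∪ B ⊆ G.neighborFinset w := by
      apply union_subset inter_subset_left
      intro y hy
      exact (G.mem_neighborFinset _ _).2 (hcross w hwA y hy)
    have hdisj : Disjoint ((G.neighborFinset w) ∩ A) B :=
      hABdisj.mono inter_subset_right (le_refl B)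
    have h1 := card_le_card hsub
    rw [card_union_of_disjoint hdisj] at h1
    have h2 : (G.neighborFinset w).card = G.degree w := rfl
    have h3 := G.degree_le_maxDegree w
    unfold degOn at hwdeg
    omega
  have hdegB : maxDegOn G B + A.card ≤ G.maxDegree := by
    obtain ⟨w, hwB, hwdeg⟩ := exists_maxDegOn_mem G hBne
    have hsub : ((G.neighborFinset w) ∩ B) ∪ A ⊆ G.neighborFinset w := by
      apply union_subset inter_subset_left
      intro y hy
      exact (G.mem_neighborFinset _ _).2 (hcross y hy w hwB).symm
    have hdisj : Disjoint ((G.neighborFinset w) ∩ B) A :=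
      hABdisj.symm.mono inter_subset_right (le_refl A)
    have h1 := card_le_card hsub
    rw [card_union_of_disjoint hdisj] at h1
    have h2 : (G.neighborFinset w).card = G.degree w := rfl
    have h3 := G.degree_le_maxDegree w
    unfold degOn at hwdeg
    omega
  have htop := toNat_chrom_le_chiOn_univ G
  omega

open Finset CB in
theorem chromatic_bound_main {V : Type*} [Fintype V] [DecidableEq V] [Nonempty V]
    (G : SimpleGraph V) [DecidableRel G.Adj]
    (K : Finset V) (hK : ¬ (Gᶜ.induce ((K : Set V)ᶜ)).Preconnected)
    (s : Finset V) (hs : s.Nonempty) :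
    (G.chromaticNumber.toNat : ℝ) ≤
      (1 / 2) * ((G.cliqueNum : ℝ) + (G.maxDegree : ℝ) + 1) +
      (4 * ((G.induce (K : Set V)).chromaticNumber.toNat : ℝ)
        + 3 * ((G.induce ((s \ K : Finset V) : Set V)).chromaticNumber.toNat : ℝ)
        - ((s \ K).card : ℝ)) / 4 := by
  have h := main_nat_ineq G K hK s
  have hKeq : chiOn G K = (G.induce (K : Set V)).chromaticNumber.toNat := rfl
  have hSeq : chiOn G (s \ K)
      = (G.induce ((s \ K : Finset V) : Set V)).chromaticNumber.toNat := rfl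
  rw [hKeq, hSeq] at h
  have hcast : (4 * G.chromaticNumber.toNat + (s \ K).card : ℝ) ≤
      (2 * G.cliqueNum + 2 * G.maxDegree + 2
        + 4 * (G.induce (K : Set V)).chromaticNumber.toNat
        + 3 * (G.induce ((s \ K : Finset V) : Set V)).chromaticNumber.toNat : ℝ) := by
    exact_mod_cast h
  push_cast at hcast
  linarith


/-- Let `G` be a finite simple graph, `K` a cut-set in the complement of `G`, and
`H = G[s]` a (non-empty) induced subgraph of `G`.  Then
`χ(G) ≤ (1/2) (ω(G) + Δ(G) + 1) + (4 χ(G[K]) + 3 χ(H ∖ K) − |H ∖ K|)/4`. -/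
theorem chromatic_bound_with_cutset_and_induced_subgraph {V : Type*} [Fintype V] [DecidableEq V] [Nonempty V]
    (G : SimpleGraph V) [DecidableRel G.Adj]
    (K : Finset V) (hK : Gᶜ.IsCutSet K)
    (s : Finset V) (hs : s.Nonempty) :
    (G.chromaticNumber.toNat : ℝ) ≤
      (1 / 2) * ((G.cliqueNum : ℝ) + (G.maxDegree : ℝ) + 1) +
      (4 * ((G.induce (K : Set V)).chromaticNumber.toNat : ℝ)
        + 3 * ((G.induce ((s \ K : Finset V) : Set V)).chromaticNumber.toNat : ℝ)
        - ((s \ K).card : ℝ)) / 4 :=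
  chromatic_bound_main G K hK s hs
end
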